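/- arXiv:1703.01654 — 7 statements merged into one kernel-verified Lean document; each statement's English description precedes it below -/
import Mathlib

section
/- Let μ be a σ-finite measure on a measurable space 𝒳 and let s, t be probability densities with respect to μ such that the probability measures P_s = s·μ and P_t = t·μ are distinct. If X₁,…,Xₙ are i.i.d. with law P_s, then the Hellinger affinity ρ(P_s,P_t) = ∫√(s t) dμ satisfies ρ(P_s,P_t) < 1, and the probability (under P_s) that the likelihood of t exceeds that of s is bounded by its n-th power: P_s[∏_{i=1}^n t(X_i) > ∏_{i=1}^n s(X_i)] ≤ ρ(P_s,P_t)^n. -/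
open MeasureTheory ENNReal

private lemma sq_add_sq_eq {a b : ℝ≥0∞} (h : a ≤ b) :
    a ^ 2 + b ^ 2 = 2 * (a * b) + (b - a) ^ 2 := by
  rcases eq_or_ne a ∞ with rfl | ha
  · have hb : b = ∞ := top_le_iff.mp h
    subst hb
    simp [pow_two]
  · obtain ⟨c, rfl⟩ : ∃ c, b = a + c := ⟨b - a, (add_tsub_cancel_of_le h).symm⟩
    rw [ENNReal.add_sub_cancel_left ha]
    ring

private lemma sq_add_sq_eq' (a b : ℝ≥0∞) :
    a ^ 2 + b ^ 2 = 2 * (a * b) + ((a - b) ^ 2 + (b - a) ^ 2) := by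
  rcases le_total a b with h | h
  · rw [tsub_eq_zero_of_le h]
    simpa using sq_add_sq_eq h
  · rw [tsub_eq_zero_of_le h, mul_comm a b, add_comm (a ^ 2)]
    simpa using sq_add_sq_eq h

private lemma lintegral_pi_prod {𝒳 : Type*} [MeasurableSpace 𝒳] (ν : Measure 𝒳) [SigmaFinite ν]
    {n : ℕ} (f : Fin n → 𝒳 → ℝ≥0∞) (hf : ∀ i, Measurable (f i)) :
    ∫⁻ x, ∏ i, f i (x i) ∂(Measure.pi fun _ : Fin n => ν) = ∏ i, ∫⁻ x, f i x ∂ν := by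
  induction n with
  | zero => simp [lintegral_const, Measure.pi_univ]
  | succ n ih =>
    have hmp := measurePreserving_piFinSuccAbove (fun _ : Fin (n + 1) => ν) 0
    have hF : Measurable fun p : 𝒳 × (Fin n → 𝒳) =>
        f 0 p.1 * ∏ j, f (Fin.succ j) (p.2 j) :=
      ((hf 0).comp measurable_fst).mul
        (Finset.measurable_prod _ fun j _ =>
          (hf _).comp ((measurable_pi_apply j).comp measurable_snd))
    have key : ∫⁻ x, ∏ i, f i (x i) ∂(Measure.pi fun _ : Fin (n + 1) => ν)
        = ∫⁻ p, f 0 p.1 * ∏ j, f (Fin.succ j) (p.2 j)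
            ∂(ν.prod (Measure.pi fun _ : Fin n => ν)) := by
      rw [← hmp.lintegral_comp hF]
      refine lintegral_congr fun x => ?_
      simp only [MeasurableEquiv.piFinSuccAbove_apply]
      rw [Fin.prod_univ_succ]
      congr 1
    rw [key, lintegral_prod _ hF.aemeasurable]
    have inner : ∀ x : 𝒳, ∫⁻ y, f 0 x * ∏ j, f (Fin.succ j) (y j)
          ∂(Measure.pi fun _ : Fin n => ν)
        = f 0 x * ∏ j, ∫⁻ z, f (Fin.succ j) z ∂ν := by
      intro x
      have hprod : Measurable fun y : Fin n → 𝒳 => ∏ j, f (Fin.succ j) (y j) :=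
        Finset.measurable_prod _ fun j _ => (hf j.succ).comp (measurable_pi_apply j)
      rw [lintegral_const_mul (f 0 x) hprod, ih (fun j => f (Fin.succ j)) (fun j => hf _)]
    rw [lintegral_congr inner, lintegral_mul_const _ (hf 0), Fin.prod_univ_succ, mul_comm]

private lemma pi_withDensity {𝒳 : Type*} [MeasurableSpace 𝒳] (μ : Measure 𝒳) [SigmaFinite μ]
    (f : 𝒳 → ℝ≥0∞) (hf : Measurable f) (hf1 : ∫⁻ x, f x ∂μ = 1) (n : ℕ) :
    Measure.pi (fun _ : Fin n => μ.withDensity f)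
      = (Measure.pi fun _ : Fin n => μ).withDensity fun x => ∏ i, f (x i) := by
  have hfin : IsFiniteMeasure (μ.withDensity f) := by
    constructor
    rw [withDensity_apply _ MeasurableSet.univ, setLIntegral_univ, hf1]
    exact one_lt_top
  refine Measure.pi_eq fun S hS => ?_
  classical
  rw [withDensity_apply _ (MeasurableSet.univ_pi hS),
    ← lintegral_indicator (MeasurableSet.univ_pi hS)]
  have hind : ∀ x : Fin n → 𝒳,
      (Set.univ.pi S).indicator (fun x => ∏ i, f (x i)) x
        = ∏ i, (S i).indicator f (x i) := by
    intro x
    by_cases hx : x ∈ Set.univ.pi S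
    · rw [Set.indicator_of_mem hx]
      refine Finset.prod_congr rfl fun i _ => ?_
      rw [Set.indicator_of_mem (hx i (Set.mem_univ i))]
    · rw [Set.indicator_of_notMem hx]
      rw [Set.mem_univ_pi] at hx
      push_neg at hx
      obtain ⟨i, hi⟩ := hx
      exact (Finset.prod_eq_zero (Finset.mem_univ i)
        (by rw [Set.indicator_of_notMem hi])).symm
  simp_rw [hind]
  rw [lintegral_pi_prod μ _ (fun i => hf.indicator (hS i))]
  refine Finset.prod_congr rfl fun i _ => ?_
  rw [lintegral_indicator (hS i), withDensity_apply _ (hS i)]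

/-- If `s, t` are probability densities w.r.t. a σ-finite measure `μ` with
`P_s = s·μ ≠ P_t = t·μ`, then the Hellinger affinity `ρ(P_s,P_t) = ∫ √(s t) dμ` is `< 1`
and the `P_s^{⊗n}`-probability that the likelihood of `t` exceeds that of `s` is at most
`ρ(P_s,P_t)^n`. -/
theorem likelihood_test_error_le_affinity_pow
    {𝒳 : Type*} [MeasurableSpace 𝒳] (μ : Measure 𝒳) [SigmaFinite μ]
    (s t : 𝒳 → ℝ≥0∞) (hs : Measurable s) (ht : Measurable t)
    (hs1 : ∫⁻ x, s x ∂μ = 1) (ht1 : ∫⁻ x, t x ∂μ = 1)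
    (hne : μ.withDensity s ≠ μ.withDensity t) (n : ℕ) :
    (∫⁻ x, (s x * t x) ^ (1/2 : ℝ) ∂μ) < 1 ∧
    (Measure.pi fun _ : Fin n => μ.withDensity s)
        {x | ∏ i, s (x i) < ∏ i, t (x i)} ≤
      (∫⁻ x, (s x * t x) ^ (1/2 : ℝ) ∂μ) ^ n := by
  set F : 𝒳 → ℝ≥0∞ := fun x => s x ^ (1/2 : ℝ) with hF
  set G : 𝒳 → ℝ≥0∞ := fun x => t x ^ (1/2 : ℝ) with hG
  have hFm : Measurable F := hs.pow_const _
  have hGm : Measurable G := ht.pow_const _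
  have hFsq : ∀ x, F x ^ 2 = s x := by
    intro x
    rw [hF, ← ENNReal.rpow_natCast _ 2, ← ENNReal.rpow_mul]
    norm_num
  have hGsq : ∀ x, G x ^ 2 = t x := by
    intro x
    rw [hG, ← ENNReal.rpow_natCast _ 2, ← ENNReal.rpow_mul]
    norm_num
  have hFG : ∀ x, F x * G x = (s x * t x) ^ (1/2 : ℝ) := fun x =>
    (ENNReal.mul_rpow_of_nonneg _ _ (by norm_num)).symm
  set ρ : ℝ≥0∞ := ∫⁻ x, (s x * t x) ^ (1/2 : ℝ) ∂μ with hρ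
  set D : 𝒳 → ℝ≥0∞ := fun x => (F x - G x) ^ 2 + (G x - F x) ^ 2 with hD
  have hDm : Measurable D := ((hFm.sub hGm).pow_const _).add ((hGm.sub hFm).pow_const _)
  have key : 2 * ρ + ∫⁻ x, D x ∂μ = 2 := by
    have h1 : ∀ x, F x ^ 2 + G x ^ 2 = 2 * (F x * G x) + D x := fun x => sq_add_sq_eq' _ _
    have h2 : ∫⁻ x, (F x ^ 2 + G x ^ 2) ∂μ = 2 := by
      rw [lintegral_add_left (hFm.pow_const _)]
      simp_rw [hFsq, hGsq]
      rw [hs1, ht1]; norm_num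
    have h3 : ∫⁻ x, (2 * (F x * G x) + D x) ∂μ = 2 * ρ + ∫⁻ x, D x ∂μ := by
      rw [lintegral_add_left (f := fun x => 2 * (F x * G x)) (((hFm.mul hGm).const_mul 2)),
        lintegral_const_mul (f := fun x => F x * G x) _ (hFm.mul hGm)]
      simp_rw [hFG]
      rfl
    calc 2 * ρ + ∫⁻ x, D x ∂μ = ∫⁻ x, (2 * (F x * G x) + D x) ∂μ := h3.symm
      _ = ∫⁻ x, (F x ^ 2 + G x ^ 2) ∂μ := lintegral_congr fun x => (h1 x).symm
      _ = 2 := h2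
  have hρle : ρ ≤ 1 := by
    by_contra hcon
    push_neg at hcon
    have : (2 : ℝ≥0∞) < 2 * ρ := by
      calc (2 : ℝ≥0∞) = 2 * 1 := (mul_one 2).symm
      _ < 2 * ρ := ENNReal.mul_lt_mul_right (a := 2) (by norm_num) (by norm_num) hcon
    have h2le : 2 * ρ ≤ 2 := by
      conv_rhs => rw [← key]
      exact le_self_add
    exact absurd (lt_of_lt_of_le this h2le) (lt_irrefl _)
  have hρne : ρ ≠ 1 := by
    intro h1
    rw [h1, mul_one] at key
    have hD0 : ∫⁻ x, D x ∂μ = 0 := by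
      have : (2 : ℝ≥0∞) + ∫⁻ x, D x ∂μ = 2 + 0 := by rw [add_zero]; exact key
      exact (ENNReal.add_right_inj (by norm_num)).mp this
    have hae : ∀ᵐ x ∂μ, D x = 0 := (lintegral_eq_zero_iff hDm).mp hD0
    have hst : s =ᵐ[μ] t := by
      filter_upwards [hae] with x hx
      rw [hD] at hx
      simp only [add_eq_zero, pow_eq_zero_iff (two_ne_zero)] at hx
      have hFG' : F x = G x :=
        le_antisymm (tsub_eq_zero_iff_le.mp hx.1) (tsub_eq_zero_iff_le.mp hx.2)
      rw [← hFsq x, ← hGsq x, hFG']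
    exact hne (withDensity_congr_ae hst)
  refine ⟨lt_of_le_of_ne hρle hρne, ?_⟩
  have hsprod : Measurable fun x : Fin n → 𝒳 => ∏ i, s (x i) :=
    Finset.measurable_prod _ fun i _ => hs.comp (measurable_pi_apply i)
  have htprod : Measurable fun x : Fin n → 𝒳 => ∏ i, t (x i) :=
    Finset.measurable_prod _ fun i _ => ht.comp (measurable_pi_apply i)
  have hA : MeasurableSet {x : Fin n → 𝒳 | ∏ i, s (x i) < ∏ i, t (x i)} :=
    measurableSet_lt hsprod htprod
  rw [pi_withDensity μ s hs hs1 n, withDensity_apply _ hA]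
  have step1 : ∫⁻ x in {x : Fin n → 𝒳 | ∏ i, s (x i) < ∏ i, t (x i)}, ∏ i, s (x i)
        ∂(Measure.pi fun _ : Fin n => μ)
      ≤ ∫⁻ x, ∏ i, (s (x i) * t (x i)) ^ (1/2 : ℝ) ∂(Measure.pi fun _ : Fin n => μ) := by
    refine le_trans (setLIntegral_mono (Finset.measurable_prod _ fun i _ =>
      ((hs.comp (measurable_pi_apply i)).mul (ht.comp (measurable_pi_apply i))).pow_const _)
      fun x hx => ?_) (setLIntegral_le_lintegral _ _)
    have hx' : ∏ i, s (x i) < ∏ i, t (x i) := hx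
    have e1 : ∏ i, (s (x i) * t (x i)) ^ (1/2 : ℝ)
        = ((∏ i, s (x i)) * ∏ i, t (x i)) ^ (1/2 : ℝ) := by
      rw [ENNReal.prod_rpow_of_nonneg (by norm_num : (0:ℝ) ≤ 1/2), Finset.prod_mul_distrib]
    have e2 : ((∏ i, s (x i)) * ∏ i, s (x i)) ^ (1/2 : ℝ) = ∏ i, s (x i) := by
      rw [← sq, ← ENNReal.rpow_natCast _ 2, ← ENNReal.rpow_mul]
      norm_num
    calc ∏ i, s (x i) = ((∏ i, s (x i)) * ∏ i, s (x i)) ^ (1/2 : ℝ) := e2.symm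
      _ ≤ ((∏ i, s (x i)) * ∏ i, t (x i)) ^ (1/2 : ℝ) :=
        ENNReal.rpow_le_rpow (mul_le_mul_right hx'.le _) (by norm_num)
      _ = ∏ i, (s (x i) * t (x i)) ^ (1/2 : ℝ) := e1.symm
  refine step1.trans ?_
  rw [lintegral_pi_prod μ (fun _ y => (s y * t y) ^ (1/2 : ℝ))
    (fun i => (hs.mul ht).pow_const _)]
  simp [Finset.prod_const, hρ]
end

section
/- Let μ be a σ-finite measure on 𝒳 and let 𝒮 be a finite set of probability densities with respect to μ such that the associated probability measures {P_t = t·μ, t ∈ 𝒮} are pairwise distinct, and such that for all s, t, u ∈ 𝒮 with t ≠ u one has P_s^{⊗n}[∏_{i=1}^n t(X_i) = ∏_{i=1}^n u(X_i)] = 0. Then for every s ∈ 𝒮 and every n, P_s^{⊗n}[∃ t ∈ 𝒮, t ≠ s, with ∏_{i=1}^n t(X_i) ≥ ∏_{i=1}^n s(X_i)] ≤ Σ_{t ∈ 𝒮, t ≠ s} ρ(P_s,P_t)^n; consequently, the maximum-likelihood estimator t̂ₙ = argmax_{t∈𝒮} ∏_{i=1}^n t(X_i) (which is a.s. well defined and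 unique) satisfies sup_{s∈𝒮} P_s^{⊗n}[t̂ₙ ≠ s] → 0 as n → ∞. -/
open MeasureTheory ENNReal Filter Classical
open scoped NNReal

private lemma nnreal_amgm (a b : ℝ≥0) : (a * b) ^ (1/2 : ℝ) ≤ (a + b) / 2 := by
  have h : a * b ≤ ((a + b) / 2) ^ 2 := by
    rw [← NNReal.coe_le_coe]; push_cast; nlinarith [sq_nonneg ((a : ℝ) - b)]
  calc (a * b) ^ (1/2 : ℝ) ≤ (((a + b) / 2) ^ 2) ^ (1/2 : ℝ) :=
        NNReal.rpow_le_rpow h (by norm_num)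
    _ = (a + b) / 2 := by
        rw [← NNReal.rpow_natCast ((a + b) / 2) 2, ← NNReal.rpow_mul]; norm_num

private lemma nnreal_amgm_eq (a b : ℝ≥0) (h : (a + b) / 2 ≤ (a * b) ^ (1/2 : ℝ)) : a = b := by
  have h2 : ((a + b) / 2) ^ 2 ≤ a * b := by
    calc ((a + b) / 2) ^ 2 ≤ ((a * b) ^ (1/2 : ℝ)) ^ 2 := pow_le_pow_left₀ zero_le h 2
      _ = a * b := by rw [← NNReal.rpow_natCast _ 2, ← NNReal.rpow_mul]; norm_num
  have h3 : (((a : ℝ) + b) / 2) ^ 2 ≤ (a : ℝ) * b := by exact_mod_cast h2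
  have h4 : ((a : ℝ) - b) ^ 2 ≤ 0 := by nlinarith
  have h5 : ((a : ℝ) - b) ^ 2 = 0 := le_antisymm h4 (sq_nonneg _)
  have h6 : (a : ℝ) = b := by nlinarith [sq_nonneg ((a : ℝ) - b)]
  exact_mod_cast h6

private lemma cast_half (p : ℝ≥0) : ((p / 2 : ℝ≥0) : ℝ≥0∞) = (p : ℝ≥0∞) / 2 := by
  rw [ENNReal.coe_div (by norm_num)]
  norm_num

private lemma cast_sqrt (p : ℝ≥0) : ((p ^ (1/2 : ℝ) : ℝ≥0) : ℝ≥0∞) = (p : ℝ≥0∞) ^ (1/2 : ℝ) :=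
  ENNReal.coe_rpow_of_nonneg _ (by norm_num)

private lemma ennreal_amgm (a b : ℝ≥0∞) : (a * b) ^ (1/2 : ℝ) ≤ (a + b) / 2 := by
  rcases eq_or_ne a ∞ with rfl | ha
  · rcases eq_or_ne b 0 with rfl | hb
    · simp [ENNReal.zero_rpow_of_pos]
    · have h : (⊤ + b) / 2 = (⊤ : ℝ≥0∞) := by
        rw [top_add, ENNReal.top_div_of_ne_top (by norm_num)]
      rw [h]; exact le_top
  rcases eq_or_ne b ∞ with rfl | hb
  · rcases eq_or_ne a 0 with rfl | ha0
    · simp [ENNReal.zero_rpow_of_pos]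
    · have h : (a + ⊤) / 2 = (⊤ : ℝ≥0∞) := by
        rw [add_top, ENNReal.top_div_of_ne_top (by norm_num)]
      rw [h]; exact le_top
  lift a to ℝ≥0 using ha
  lift b to ℝ≥0 using hb
  rw [← ENNReal.coe_mul, ← cast_sqrt, ← ENNReal.coe_add, ← cast_half]
  exact ENNReal.coe_le_coe.2 (nnreal_amgm a b)

/-- The Hellinger affinity of two distinct probability densities is `< 1`. -/
private lemma hellinger_lt_one {𝒳 : Type*} [MeasurableSpace 𝒳] (μ : Measure 𝒳) [SigmaFinite μ]
    {s t : 𝒳 → ℝ≥0∞} (hs : Measurable s) (ht : Measurable t)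
    (hds : ∫⁻ x, s x ∂μ = 1) (hdt : ∫⁻ x, t x ∂μ = 1)
    (hne : μ.withDensity s ≠ μ.withDensity t) :
    ∫⁻ x, (s x * t x) ^ (1/2 : ℝ) ∂μ < 1 := by
  have hm : Measurable fun x => (s x * t x) ^ (1/2 : ℝ) := (hs.mul ht).pow_const _
  have hmg : Measurable fun x => (s x + t x) / 2 := (hs.add ht).div_const 2
  have hle : ∀ x, (s x * t x) ^ (1/2 : ℝ) ≤ (s x + t x) / 2 := fun x => ennreal_amgm _ _
  have hIg : ∫⁻ x, (s x + t x) / 2 ∂μ = 1 := by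
    simp_rw [div_eq_mul_inv]
    rw [lintegral_mul_const (f := fun x => s x + t x) _ (hs.add ht), lintegral_add_left hs, hds, hdt]
    rw [show (1 : ℝ≥0∞) + 1 = 2 by norm_num, ENNReal.mul_inv_cancel (by norm_num) (by norm_num)]
  have hρ1 : ∫⁻ x, (s x * t x) ^ (1/2 : ℝ) ∂μ ≤ 1 := hIg ▸ lintegral_mono hle
  rcases lt_or_eq_of_le hρ1 with h | h
  · exact h
  exfalso
  have hsub : ∫⁻ x, ((s x + t x) / 2 - (s x * t x) ^ (1/2 : ℝ)) ∂μ = 0 := by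
    rw [lintegral_sub hm (by rw [h]; exact one_ne_top) (Filter.Eventually.of_forall hle),
      hIg, h, tsub_self]
  have hae : ∀ᵐ x ∂μ, (s x + t x) / 2 - (s x * t x) ^ (1/2 : ℝ) = 0 :=
    (lintegral_eq_zero_iff (hmg.sub hm)).1 hsub
  have hfs : ∀ᵐ x ∂μ, s x < ∞ := ae_lt_top hs (by rw [hds]; exact one_ne_top)
  have hft : ∀ᵐ x ∂μ, t x < ∞ := ae_lt_top ht (by rw [hdt]; exact one_ne_top)
  have heq : s =ᵐ[μ] t := by
    filter_upwards [hae, hfs, hft] with x h0 hxs hxt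
    have ha : ((s x).toNNReal : ℝ≥0∞) = s x := ENNReal.coe_toNNReal hxs.ne
    have hb : ((t x).toNNReal : ℝ≥0∞) = t x := ENNReal.coe_toNNReal hxt.ne
    set a := (s x).toNNReal
    set b := (t x).toNNReal
    rw [← ha, ← hb] at h0 ⊢
    have h1 : ((a : ℝ≥0∞) + b) / 2 ≤ ((a : ℝ≥0∞) * b) ^ (1/2 : ℝ) := tsub_eq_zero_iff_le.1 h0
    rw [← ENNReal.coe_mul, ← cast_sqrt, ← ENNReal.coe_add, ← cast_half] at h1
    exact_mod_cast congrArg (fun p : ℝ≥0 => (p : ℝ≥0∞))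
      (nnreal_amgm_eq a b (ENNReal.coe_le_coe.1 h1))
  exact hne (withDensity_congr_ae heq)

/-- Fubini for lower integrals of products of single-coordinate functions. -/
private lemma lintegral_pi_fin_prod {𝒳 : Type*} [MeasurableSpace 𝒳] (μ : Measure 𝒳)
    [SigmaFinite μ] : ∀ {n : ℕ} (f : Fin n → 𝒳 → ℝ≥0∞), (∀ i, Measurable (f i)) →
    ∫⁻ x, ∏ i, f i (x i) ∂(Measure.pi fun _ : Fin n => μ) = ∏ i, ∫⁻ y, f i y ∂μ := by
  intro n
  induction n with
  | zero =>
    intro f _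
    simp [lintegral_const, Measure.pi_univ]
  | succ n ih =>
    intro f hf
    have hF : Measurable fun p : 𝒳 × (Fin n → 𝒳) =>
        f 0 p.1 * ∏ j : Fin n, f (Fin.succ j) (p.2 j) := by
      refine ((hf 0).comp measurable_fst).mul ?_
      exact Finset.measurable_prod _ fun j _ =>
        (hf (Fin.succ j)).comp ((measurable_pi_apply j).comp measurable_snd)
    have key := (measurePreserving_piFinSuccAbove (fun _ : Fin (n + 1) => μ) 0).lintegral_comp
      (f := fun p : 𝒳 × (Fin n → 𝒳) => f 0 p.1 * ∏ j : Fin n, f (Fin.succ j) (p.2 j)) hF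
    calc ∫⁻ x, ∏ i, f i (x i) ∂(Measure.pi fun _ : Fin (n + 1) => μ)
        = ∫⁻ x, f 0 (x 0) * ∏ j : Fin n, f (Fin.succ j)
            ((MeasurableEquiv.piFinSuccAbove (fun _ : Fin (n + 1) => 𝒳) 0 x).2 j)
              ∂(Measure.pi fun _ : Fin (n + 1) => μ) := by
          refine lintegral_congr fun x => ?_
          rw [Fin.prod_univ_succ]
          rfl
      _ = ∫⁻ p : 𝒳 × (Fin n → 𝒳), f 0 p.1 * ∏ j : Fin n, f (Fin.succ j) (p.2 j)
            ∂(μ.prod (Measure.pi fun _ : Fin n => μ)) := key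
      _ = (∫⁻ y, f 0 y ∂μ) * ∫⁻ y, ∏ j : Fin n, f (Fin.succ j) (y j)
            ∂(Measure.pi fun _ : Fin n => μ) := by
          exact lintegral_prod_mul (hf 0).aemeasurable
            (Finset.measurable_prod _ fun j _ =>
              (hf (Fin.succ j)).comp (measurable_pi_apply j)).aemeasurable
      _ = (∫⁻ y, f 0 y ∂μ) * ∏ j : Fin n, ∫⁻ y, f (Fin.succ j) y ∂μ := by
          rw [ih _ fun j => hf (Fin.succ j)]
      _ = ∏ i, ∫⁻ y, f i y ∂μ := (Fin.prod_univ_succ (f := fun i => ∫⁻ y, f i y ∂μ)).symm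

/-- The `n`-fold product of `μ.withDensity f` is the withDensity of the product density. -/
private lemma pi_withDensity_eq {𝒳 : Type*} [MeasurableSpace 𝒳] (μ : Measure 𝒳) [SigmaFinite μ]
    {n : ℕ} (f : 𝒳 → ℝ≥0∞) (hf : Measurable f) (hfin : ∫⁻ x, f x ∂μ ≠ ∞) :
    Measure.pi (fun _ : Fin n => μ.withDensity f)
      = (Measure.pi fun _ : Fin n => μ).withDensity fun x => ∏ i, f (x i) := by
  haveI : IsFiniteMeasure (μ.withDensity f) := by
    constructor
    rw [withDensity_apply _ MeasurableSet.univ, setLIntegral_univ, lt_top_iff_ne_top]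
    exact hfin
  apply Measure.pi_eq
  intro A hA
  rw [withDensity_apply _ (MeasurableSet.univ_pi hA),
    ← lintegral_indicator (MeasurableSet.univ_pi hA) _]
  have hind : ∀ x : Fin n → 𝒳,
      (Set.univ.pi A).indicator (fun x => ∏ i, f (x i)) x = ∏ i, (A i).indicator f (x i) := by
    intro x
    by_cases hx : x ∈ Set.univ.pi A
    · rw [Set.indicator_of_mem hx]
      exact Finset.prod_congr rfl fun i _ =>
        (Set.indicator_of_mem (hx i (Set.mem_univ i)) f).symm
    · rw [Set.indicator_of_notMem hx]
      obtain ⟨i, hi⟩ : ∃ i, x i ∉ A i := by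
        by_contra hcon
        push_neg at hcon
        exact hx fun i _ => hcon i
      exact (Finset.prod_eq_zero (Finset.mem_univ i) (Set.indicator_of_notMem hi f)).symm
  simp_rw [hind]
  rw [lintegral_pi_fin_prod μ _ fun i => hf.indicator (hA i)]
  exact Finset.prod_congr rfl fun i _ => by
    rw [lintegral_indicator (hA i), withDensity_apply _ (hA i)]

/-- For a finite identifiable model `𝒮` of densities w.r.t. `μ` with a.s. no
likelihood ties, the probability (under `P_s^{⊗n}`) that some `t ≠ s` is at least as likely
as `s` is bounded by `∑_{t ≠ s} ρ(P_s,P_t)^n`; consequently any maximum-likelihood estimator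
`t̂ₙ` satisfies `sup_{s ∈ 𝒮} P_s^{⊗n}[t̂ₙ ≠ s] → 0` as `n → ∞`. -/
theorem mle_consistent_on_finite_model
    {𝒳 : Type*} [MeasurableSpace 𝒳] (μ : Measure 𝒳) [SigmaFinite μ]
    (𝒮 : Finset (𝒳 → ℝ≥0∞))
    (hmeas : ∀ s ∈ 𝒮, Measurable s)
    (hdens : ∀ s ∈ 𝒮, ∫⁻ x, s x ∂μ = 1)
    (hdist : ∀ s ∈ 𝒮, ∀ t ∈ 𝒮, s ≠ t → μ.withDensity s ≠ μ.withDensity t)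
    (hties : ∀ s ∈ 𝒮, ∀ t ∈ 𝒮, ∀ u ∈ 𝒮, t ≠ u → ∀ n : ℕ, 1 ≤ n →
      (Measure.pi fun _ : Fin n => μ.withDensity s)
        {x | ∏ i, t (x i) = ∏ i, u (x i)} = 0) :
    (∀ s ∈ 𝒮, ∀ n : ℕ,
      (Measure.pi fun _ : Fin n => μ.withDensity s)
          {x | ∃ t ∈ 𝒮, t ≠ s ∧ ∏ i, s (x i) ≤ ∏ i, t (x i)} ≤
        ∑ t ∈ 𝒮.erase s, (∫⁻ x, (s x * t x) ^ (1/2 : ℝ) ∂μ) ^ n) ∧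
    ∀ that : (n : ℕ) → (Fin n → 𝒳) → (𝒳 → ℝ≥0∞),
      (∀ n x, that n x ∈ 𝒮 ∧ ∀ u ∈ 𝒮, ∏ i, u (x i) ≤ ∏ i, (that n x) (x i)) →
      Tendsto (fun n : ℕ => ⨆ s ∈ 𝒮,
          (Measure.pi fun _ : Fin n => μ.withDensity s) {x | that n x ≠ s})
        atTop (nhds 0) := by
  classical
  have key : ∀ s ∈ 𝒮, ∀ n : ℕ,
      (Measure.pi fun _ : Fin n => μ.withDensity s)
          {x | ∃ t ∈ 𝒮, t ≠ s ∧ ∏ i, s (x i) ≤ ∏ i, t (x i)} ≤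
        ∑ t ∈ 𝒮.erase s, (∫⁻ x, (s x * t x) ^ (1/2 : ℝ) ∂μ) ^ n := by
    intro s hs n
    have hsm := hmeas s hs
    have hpi : Measure.pi (fun _ : Fin n => μ.withDensity s)
        = (Measure.pi fun _ : Fin n => μ).withDensity fun x => ∏ i, s (x i) :=
      pi_withDensity_eq μ s hsm (by rw [hdens s hs]; exact one_ne_top)
    have hsub : {x : Fin n → 𝒳 | ∃ t ∈ 𝒮, t ≠ s ∧ ∏ i, s (x i) ≤ ∏ i, t (x i)}
        ⊆ ⋃ t ∈ 𝒮.erase s, {x : Fin n → 𝒳 | ∏ i, s (x i) ≤ ∏ i, t (x i)} := by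
      rintro x ⟨t, ht, hts, hle⟩
      exact Set.mem_biUnion (Finset.mem_erase.2 ⟨hts, ht⟩) hle
    refine (measure_mono hsub).trans ((measure_biUnion_finset_le _ _).trans ?_)
    refine Finset.sum_le_sum fun t ht => ?_
    have htm := hmeas t (Finset.mem_of_mem_erase ht)
    have hAset : MeasurableSet {x : Fin n → 𝒳 | ∏ i, s (x i) ≤ ∏ i, t (x i)} := by
      apply measurableSet_le
      · exact Finset.measurable_prod _ fun i _ => hsm.comp (measurable_pi_apply i)
      · exact Finset.measurable_prod _ fun i _ => htm.comp (measurable_pi_apply i)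
    rw [hpi, withDensity_apply _ hAset]
    calc ∫⁻ x in {x : Fin n → 𝒳 | ∏ i, s (x i) ≤ ∏ i, t (x i)},
            ∏ i, s (x i) ∂(Measure.pi fun _ : Fin n => μ)
        ≤ ∫⁻ x in {x : Fin n → 𝒳 | ∏ i, s (x i) ≤ ∏ i, t (x i)},
            ∏ i, (s (x i) * t (x i)) ^ (1/2 : ℝ) ∂(Measure.pi fun _ : Fin n => μ) := by
          refine setLIntegral_mono (Finset.measurable_prod _ fun i _ =>
            ((hsm.comp (measurable_pi_apply i)).mul
              (htm.comp (measurable_pi_apply i))).pow_const _) fun x hx => ?_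
          calc ∏ i, s (x i)
              = (∏ i, s (x i)) ^ (1/2 : ℝ) * (∏ i, s (x i)) ^ (1/2 : ℝ) := by
                rw [← ENNReal.rpow_add_of_nonneg _ _ (by norm_num) (by norm_num)]
                norm_num
            _ ≤ (∏ i, s (x i)) ^ (1/2 : ℝ) * (∏ i, t (x i)) ^ (1/2 : ℝ) :=
                mul_le_mul_right (ENNReal.rpow_le_rpow hx (by norm_num)) _
            _ = ∏ i, (s (x i) * t (x i)) ^ (1/2 : ℝ) := by
                rw [← ENNReal.prod_rpow_of_nonneg (by norm_num : (0:ℝ) ≤ 1/2),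
                  ← ENNReal.prod_rpow_of_nonneg (by norm_num : (0:ℝ) ≤ 1/2),
                  ← Finset.prod_mul_distrib]
                exact Finset.prod_congr rfl fun i _ =>
                  (ENNReal.mul_rpow_of_nonneg _ _ (by norm_num)).symm
      _ ≤ ∫⁻ x, ∏ i, (s (x i) * t (x i)) ^ (1/2 : ℝ) ∂(Measure.pi fun _ : Fin n => μ) :=
          setLIntegral_le_lintegral _ _
      _ = ∏ _i : Fin n, ∫⁻ y, (s y * t y) ^ (1/2 : ℝ) ∂μ :=
          lintegral_pi_fin_prod μ _ fun i => (hsm.mul htm).pow_const _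
      _ = (∫⁻ x, (s x * t x) ^ (1/2 : ℝ) ∂μ) ^ n := by
          rw [Finset.prod_const, Finset.card_univ, Fintype.card_fin]
  refine ⟨key, ?_⟩
  intro that hthat
  have hbound : ∀ n : ℕ,
      (⨆ s ∈ 𝒮, (Measure.pi fun _ : Fin n => μ.withDensity s) {x | that n x ≠ s})
      ≤ ∑ s ∈ 𝒮, ∑ t ∈ 𝒮.erase s, (∫⁻ x, (s x * t x) ^ (1/2 : ℝ) ∂μ) ^ n := by
    intro n
    refine iSup₂_le fun s hs => ?_
    have hsub : {x : Fin n → 𝒳 | that n x ≠ s}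
        ⊆ {x | ∃ t ∈ 𝒮, t ≠ s ∧ ∏ i, s (x i) ≤ ∏ i, t (x i)} := fun x hx =>
      ⟨that n x, (hthat n x).1, hx, (hthat n x).2 s hs⟩
    refine ((measure_mono hsub).trans (key s hs n)).trans ?_
    exact Finset.single_le_sum
      (f := fun s => ∑ t ∈ 𝒮.erase s, (∫⁻ x, (s x * t x) ^ (1/2 : ℝ) ∂μ) ^ n)
      (fun _ _ => zero_le) hs
  have hlim : Tendsto
      (fun n : ℕ => ∑ s ∈ 𝒮, ∑ t ∈ 𝒮.erase s, (∫⁻ x, (s x * t x) ^ (1/2 : ℝ) ∂μ) ^ n)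
      atTop (nhds 0) := by
    have h : Tendsto
        (fun n : ℕ => ∑ s ∈ 𝒮, ∑ t ∈ 𝒮.erase s, (∫⁻ x, (s x * t x) ^ (1/2 : ℝ) ∂μ) ^ n)
        atTop (nhds (∑ s ∈ 𝒮, ∑ t ∈ 𝒮.erase s, 0)) := by
      refine tendsto_finset_sum _ fun s hs => ?_
      refine tendsto_finset_sum _ fun t ht => ?_
      exact ENNReal.tendsto_pow_atTop_nhds_zero_of_lt_one
        (hellinger_lt_one μ (hmeas s hs) (hmeas t (Finset.mem_of_mem_erase ht))
          (hdens s hs) (hdens t (Finset.mem_of_mem_erase ht))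
          (hdist s hs t (Finset.mem_of_mem_erase ht)
            (Finset.ne_of_mem_erase ht).symm))
    simpa using h
  exact tendsto_of_tendsto_of_tendsto_of_le_of_le tendsto_const_nhds hlim
    (fun n => zero_le) hbound
end

section
/- Define p : ℝ → [0,∞] by p(x) = (1/6)[|x|^{−1/2}·1_{0<|x|≤1} + x^{−2}·1_{|x|>1}]. Then p is a probability density with respect to Lebesgue measure (∫_ℝ p dλ = 1), and for any n ≥ 1 and any pairwise distinct real numbers x₁,…,xₙ, the likelihood of the translation model blows up near x₁: the product ∏_{i=1}^n p(x_i − θ) tends to +∞ as θ → x₁ with θ ∉ {x₁,…,xₙ}. In particular, for any parameter set Θ containing x₁ as a limit point of Θ \ {x₁,…,xₙ}, the supremum over θ ∈ Θ of the likelihood is +∞ and no maximum-likelihood estimator exists. -/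
open MeasureTheory Filter

/-- The density `p(x) = (1/6)[|x|^{−1/2}·1_{0<|x|≤1} + x^{−2}·1_{|x|>1}]`. -/
noncomputable def unboundedDensity (x : ℝ) : ℝ :=
  (1/6) * (Set.indicator {y : ℝ | 0 < |y| ∧ |y| ≤ 1} (fun y => (Real.sqrt |y|)⁻¹) x
    + Set.indicator {y : ℝ | 1 < |y|} (fun y => (y ^ 2)⁻¹) x)

open Set

lemma ud_even (x : ℝ) : unboundedDensity |x| = unboundedDensity x := by
  unfold unboundedDensity
  simp [Set.indicator, abs_abs, sq_abs]

lemma ud_Ioc (x : ℝ) (hx : x ∈ Ioc (0:ℝ) 1) : unboundedDensity x = (1/6) * x ^ (-(1/2) : ℝ) := by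
  obtain ⟨h0, h1⟩ := hx
  unfold unboundedDensity
  rw [Set.indicator_of_mem, Set.indicator_of_notMem]
  · rw [abs_of_pos h0, Real.sqrt_eq_rpow, ← Real.rpow_neg h0.le]
    ring
  · simp only [mem_setOf_eq, not_lt, abs_of_pos h0]; exact h1
  · exact ⟨by rwa [abs_of_pos h0], by rwa [abs_of_pos h0]⟩

lemma ud_Ioi (x : ℝ) (hx : x ∈ Ioi (1:ℝ)) : unboundedDensity x = (1/6) * x ^ (-2 : ℝ) := by
  have h0 : (0:ℝ) < x := lt_trans one_pos hx
  unfold unboundedDensity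
  rw [Set.indicator_of_notMem, Set.indicator_of_mem]
  · rw [Real.rpow_neg h0.le, Real.rpow_two]
    ring
  · rwa [mem_setOf_eq, abs_of_pos h0]
  · simp only [mem_setOf_eq, abs_of_pos h0, not_and, not_le]
    intro _; exact hx

lemma ud_small {z : ℝ} (h0 : z ≠ 0) (h1 : |z| ≤ 1) :
    unboundedDensity z = (1/6) * (Real.sqrt |z|)⁻¹ := by
  unfold unboundedDensity
  rw [Set.indicator_of_mem (show z ∈ {y:ℝ | 0 < |y| ∧ |y| ≤ 1} from ⟨abs_pos.mpr h0, h1⟩),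
    Set.indicator_of_notMem (by simpa using h1)]
  ring

lemma ud_eq_min {z : ℝ} (h0 : z ≠ 0) :
    unboundedDensity z = (1/6) * min ((Real.sqrt |z|)⁻¹) ((z ^ 2)⁻¹) := by
  have hz : 0 < |z| := abs_pos.mpr h0
  have hs : 0 < Real.sqrt |z| := Real.sqrt_pos.mpr hz
  have hz2 : 0 < z ^ 2 := by positivity
  rcases le_or_gt |z| 1 with h1 | h1
  · rw [ud_small h0 h1, min_eq_left]
    apply inv_anti₀ hz2
    calc z ^ 2 = |z| ^ 2 := (sq_abs z).symm
      _ ≤ |z| := by nlinarith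
      _ ≤ Real.sqrt |z| := by
          nlinarith [Real.sq_sqrt hz.le, Real.sqrt_nonneg |z|, Real.sqrt_le_sqrt h1,
            Real.sqrt_one]
  · unfold unboundedDensity
    rw [Set.indicator_of_notMem (by simp [not_and_or]; intro; linarith),
      Set.indicator_of_mem (show z ∈ {y:ℝ | 1 < |y|} from h1), min_eq_right]
    · ring
    · apply inv_anti₀ hs
      have h2 : Real.sqrt |z| ≤ |z| := by
        nlinarith [Real.sq_sqrt (abs_nonneg z), Real.sqrt_nonneg |z|]
      calc Real.sqrt |z| ≤ |z| := h2
        _ ≤ |z| ^ 2 := by nlinarith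
        _ = z ^ 2 := sq_abs z

lemma ud_pos {z : ℝ} (h0 : z ≠ 0) : 0 < unboundedDensity z := by
  rw [ud_eq_min h0]
  have hz : 0 < |z| := abs_pos.mpr h0
  have : 0 < z ^ 2 := by positivity
  have : 0 < Real.sqrt |z| := Real.sqrt_pos.mpr hz
  positivity

lemma ud_cont {z : ℝ} (h0 : z ≠ 0) : ContinuousAt unboundedDensity z := by
  have heq : ∀ᶠ w in nhds z, unboundedDensity w
      = (1/6) * min ((Real.sqrt |w|)⁻¹) ((w ^ 2)⁻¹) := by
    filter_upwards [isOpen_compl_singleton.mem_nhds (by simpa using h0)] with w hw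
    exact ud_eq_min hw
  apply ContinuousAt.congr _ (heq.mono fun w h => h.symm)
  have hs : Real.sqrt |z| ≠ 0 := by positivity
  have hz2 : z ^ 2 ≠ 0 := pow_ne_zero _ h0
  apply ContinuousAt.mul continuousAt_const
  exact ((show ContinuousAt (fun w : ℝ => Real.sqrt |w|) z by fun_prop).inv₀ hs).min
    ((show ContinuousAt (fun w : ℝ => w ^ 2) z by fun_prop).inv₀ hz2)

lemma ud_top : Tendsto unboundedDensity (nhdsWithin (0:ℝ) {0}ᶜ) atTop := by
  have h1 : Tendsto (fun z : ℝ => Real.sqrt |z|) (nhdsWithin (0:ℝ) {0}ᶜ)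
      (nhdsWithin (0:ℝ) (Set.Ioi 0)) := by
    apply tendsto_nhdsWithin_of_tendsto_nhds_of_eventually_within
    · have : Tendsto (fun z : ℝ => Real.sqrt |z|) (nhds 0) (nhds (Real.sqrt |0|)) :=
        (Real.continuous_sqrt.comp continuous_abs).continuousAt
      simpa using this.mono_left nhdsWithin_le_nhds
    · filter_upwards [self_mem_nhdsWithin] with z hz
      exact Real.sqrt_pos.mpr (abs_pos.mpr hz)
  have h2 : Tendsto (fun z : ℝ => (Real.sqrt |z|)⁻¹) (nhdsWithin (0:ℝ) {0}ᶜ) atTop :=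
    tendsto_inv_nhdsGT_zero.comp h1
  have h3 := h2.const_mul_atTop (by norm_num : (0:ℝ) < 1/6)
  apply h3.congr'
  have hmem : Set.Icc (-1:ℝ) 1 ∈ nhdsWithin (0:ℝ) {0}ᶜ :=
    nhdsWithin_le_nhds (Icc_mem_nhds (by norm_num) (by norm_num))
  filter_upwards [hmem, self_mem_nhdsWithin] with z hz hz0
  exact (ud_small hz0 (abs_le.mpr hz)).symm

lemma intOn_Ioc : IntegrableOn unboundedDensity (Ioc (0:ℝ) 1) := by
  have h : IntervalIntegrable (fun x : ℝ => x ^ (-(1/2):ℝ)) volume 0 1 :=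
    intervalIntegral.intervalIntegrable_rpow' (by norm_num)
  rw [intervalIntegrable_iff_integrableOn_Ioc_of_le zero_le_one] at h
  exact MeasureTheory.IntegrableOn.congr_fun (h.const_mul (1/6)) (fun x hx => (ud_Ioc x hx).symm) measurableSet_Ioc

lemma intOn_Ioi : IntegrableOn unboundedDensity (Ioi (1:ℝ)) := by
  have h := integrableOn_Ioi_rpow_of_lt (a := (-2:ℝ)) (by norm_num) (c := 1) one_pos
  exact MeasureTheory.IntegrableOn.congr_fun (h.const_mul (1/6)) (fun x hx => (ud_Ioi x hx).symm) measurableSet_Ioi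

lemma val_Ioc : ∫ x in Ioc (0:ℝ) 1, unboundedDensity x = 1/3 := by
  rw [setIntegral_congr_fun measurableSet_Ioc ud_Ioc, integral_const_mul,
    ← intervalIntegral.integral_of_le zero_le_one,
    integral_rpow (Or.inl (by norm_num))]
  rw [Real.one_rpow, Real.zero_rpow (by norm_num)]
  norm_num

lemma val_Ioi : ∫ x in Ioi (1:ℝ), unboundedDensity x = 1/6 := by
  rw [setIntegral_congr_fun measurableSet_Ioi ud_Ioi, integral_const_mul,
    integral_Ioi_rpow_of_lt (by norm_num) one_pos]
  rw [Real.one_rpow]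
  norm_num

lemma ud_integral : ∫ x : ℝ, unboundedDensity x = 1 := by
  have h := integral_comp_abs (f := unboundedDensity)
  simp_rw [ud_even] at h
  rw [h, ← Ioc_union_Ioi_eq_Ioi (zero_le_one (α := ℝ)),
    setIntegral_union (Ioc_disjoint_Ioi le_rfl) measurableSet_Ioi intOn_Ioc intOn_Ioi,
    val_Ioc, val_Ioi]
  norm_num

/-- `p` is a probability density w.r.t. Lebesgue measure, and for pairwise
distinct observations `x₁,…,xₙ` the likelihood of the translation model blows up as
`θ → x₁` with `θ ∉ {x₁,…,xₙ}`; hence for any `Θ` having `x₁` as a limit point of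
`Θ \ {x₁,…,xₙ}`, the supremum of the likelihood over `Θ` is `+∞` and no maximum-likelihood
estimator exists. -/
theorem no_mle_for_unbounded_translation_family :
    (∫ x : ℝ, unboundedDensity x = 1) ∧
    ∀ (n : ℕ) (hn : 0 < n) (x : Fin n → ℝ), Function.Injective x →
      Tendsto (fun θ : ℝ => ∏ i, unboundedDensity (x i - θ))
        (nhdsWithin (x ⟨0, hn⟩) (Set.range x)ᶜ) atTop ∧
      ∀ Θ : Set ℝ, (nhdsWithin (x ⟨0, hn⟩) (Θ \ Set.range x)).NeBot →
        (∀ M : ℝ, ∃ θ ∈ Θ, M < ∏ i, unboundedDensity (x i - θ)) ∧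
        ¬∃ θ₀ ∈ Θ, ∀ θ ∈ Θ,
          ∏ i, unboundedDensity (x i - θ) ≤ ∏ i, unboundedDensity (x i - θ₀) := by
  refine ⟨ud_integral, fun n hn x hinj => ?_⟩
  set i0 : Fin n := ⟨0, hn⟩
  set x0 := x i0 with hx0
  have hx0mem : x0 ∈ Set.range x := ⟨i0, rfl⟩
  have hmain : Tendsto (fun θ : ℝ => ∏ i, unboundedDensity (x i - θ))
      (nhdsWithin x0 (Set.range x)ᶜ) atTop := by
    have hfac0 : Tendsto (fun θ : ℝ => unboundedDensity (x0 - θ))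
        (nhdsWithin x0 (Set.range x)ᶜ) atTop := by
      apply ud_top.comp
      apply tendsto_nhdsWithin_of_tendsto_nhds_of_eventually_within
      · have : Tendsto (fun θ : ℝ => x0 - θ) (nhds x0) (nhds (x0 - x0)) :=
          (continuous_const.sub continuous_id).continuousAt
        rw [sub_self] at this
        exact this.mono_left nhdsWithin_le_nhds
      · filter_upwards [self_mem_nhdsWithin] with θ hθ
        simp only [Set.mem_compl_iff] at hθ
        have : θ ≠ x0 := fun h => hθ (h ▸ hx0mem)
        simpa using sub_ne_zero.mpr (Ne.symm this)
    have hrest : Tendsto (fun θ : ℝ => ∏ i ∈ Finset.univ.erase i0, unboundedDensity (x i - θ))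
        (nhdsWithin x0 (Set.range x)ᶜ)
        (nhds (∏ i ∈ Finset.univ.erase i0, unboundedDensity (x i - x0))) := by
      apply tendsto_finset_prod
      intro i hi
      have hne : x i - x0 ≠ 0 :=
        sub_ne_zero.mpr fun h => (Finset.mem_erase.mp hi).1 (hinj h)
      have := (ud_cont hne).comp ((continuous_const.sub continuous_id).continuousAt
        (x := x0))
      simp only [Function.comp_def] at this
      exact this.mono_left nhdsWithin_le_nhds
    have hLpos : 0 < ∏ i ∈ Finset.univ.erase i0, unboundedDensity (x i - x0) := by
      apply Finset.prod_pos
      intro i hi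
      exact ud_pos (sub_ne_zero.mpr fun h => (Finset.mem_erase.mp hi).1 (hinj h))
    have := hrest.pos_mul_atTop hLpos hfac0
    apply this.congr
    intro θ
    exact Finset.prod_erase_mul Finset.univ _ (Finset.mem_univ i0)
  refine ⟨hmain, fun Θ hne => ?_⟩
  have hle : nhdsWithin x0 (Θ \ Set.range x) ≤ nhdsWithin x0 (Set.range x)ᶜ :=
    nhdsWithin_mono _ fun θ hθ => hθ.2
  have hT := hmain.mono_left hle
  have key : ∀ M : ℝ, ∃ θ ∈ Θ, M < ∏ i, unboundedDensity (x i - θ) := by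
    intro M
    have hev : ∀ᶠ θ in nhdsWithin x0 (Θ \ Set.range x),
        M < ∏ i, unboundedDensity (x i - θ) := hT.eventually_gt_atTop M
    obtain ⟨θ, hθmem, hθ⟩ := (eventually_mem_nhdsWithin.and hev).exists
    exact ⟨θ, hθmem.1, hθ⟩
  refine ⟨key, ?_⟩
  rintro ⟨θ₀, hθ₀, hmax⟩
  obtain ⟨θ, hθΘ, hgt⟩ := key (∏ i, unboundedDensity (x i - θ₀))
  exact absurd (hmax θ hθΘ) (not_le.mpr hgt)
end

section
/- Let (X_k)_{k≥1} be i.i.d. real random variables of law P_θ = N(θ,1) for an unknown θ ∈ ℝ. For each θ ∈ ℝ define the following version p_θ of the density dP_θ/dP₀ with respect to the reference measure P₀ = N(0,1): p_θ(x) = exp[θx − θ²/2] if x ≠ θ or θ ≤ 0, and p_θ(x) = exp[θx − θ²/2 + (θ²/2)exp(x²)] if x = θ > 0. Then for every θ ∈ ℝ, the probability under P_θ of the event {for all θ' ∈ ℝ with θ' ≠ X_{(n)}, ∏_{i=1}^n p_{θ'}(X_i) < ∏_{i=1}^n p_{X_{(n)}}(X_i)} tends to 1 as n → ∞, where X_{(n)}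 = max{X₁,…,Xₙ}; hence the maximum-likelihood estimator for these density versions equals X_{(n)} with probability tending to 1 and is not consistent. -/
open MeasureTheory ProbabilityTheory Filter

open Classical in
/-- The version `p_θ` of the density `dN(θ,1)/dN(0,1)` from Proposition 2 of the paper:
`p_θ(x) = exp[θx − θ²/2]` if `x ≠ θ` or `θ ≤ 0`, and
`p_θ(x) = exp[θx − θ²/2 + (θ²/2)exp(x²)]` if `x = θ > 0`. -/
noncomputable def badVersion (θ x : ℝ) : ℝ :=
  if x = θ ∧ 0 < θ then Real.exp (θ * x - θ ^ 2 / 2 + (θ ^ 2 / 2) * Real.exp (x ^ 2))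
  else Real.exp (θ * x - θ ^ 2 / 2)

open Real Set
open scoped ENNReal NNReal


section helpers
variable (ν : Measure ℝ) [IsProbabilityMeasure ν]

lemma pi_eval_mem {n : ℕ} {s : Set ℝ} (hs : MeasurableSet s) (i : Fin n) :
    Measure.pi (fun _ : Fin n => ν) {x | x i ∈ s} = ν s := by
  classical
  have hset : {x : Fin n → ℝ | x i ∈ s} = Set.pi Set.univ (fun k => if k = i then s else Set.univ) := by
    ext x
    simp only [Set.mem_setOf_eq, Set.mem_pi, Set.mem_univ, forall_true_left]
    constructor
    · intro h k; by_cases hk : k = i <;> simp [hk, h]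
    · intro h; simpa using h i
  rw [hset, Measure.pi_pi]
  rw [← Finset.mul_prod_erase Finset.univ _ (Finset.mem_univ i), if_pos rfl]
  rw [Finset.prod_eq_one fun k hk => by
    rw [if_neg (Finset.ne_of_mem_erase hk), measure_univ], mul_one]

lemma pi_pair_mem {n : ℕ} {s t : Set ℝ} (hs : MeasurableSet s) (ht : MeasurableSet t)
    {i j : Fin n} (hij : i ≠ j) :
    Measure.pi (fun _ : Fin n => ν) {x | x i ∈ s ∧ x j ∈ t} = ν s * ν t := by
  classical
  have hset : {x : Fin n → ℝ | x i ∈ s ∧ x j ∈ t}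
      = Set.pi Set.univ (fun k => if k = i then s else if k = j then t else Set.univ) := by
    ext x
    simp only [Set.mem_setOf_eq, Set.mem_pi, Set.mem_univ, forall_true_left]
    constructor
    · intro h k
      by_cases hk : k = i
      · simp [hk, if_pos rfl, h.1]
      · by_cases hk' : k = j <;> simp [hk, hk', h.2, (Ne.symm hij : j ≠ i)]
    · intro h
      constructor
      · simpa using h i
      · have := h j; rwa [if_neg (by exact fun hji => hij hji.symm), if_pos rfl] at this
  rw [hset, Measure.pi_pi]
  rw [← Finset.mul_prod_erase Finset.univ _ (Finset.mem_univ i), if_pos rfl]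
  rw [← Finset.mul_prod_erase _ _ (Finset.mem_erase.2 ⟨fun hji => hij hji.symm, Finset.mem_univ j⟩)]
  rw [if_neg (fun hji : j = i => hij hji.symm), if_pos rfl]
  rw [Finset.prod_eq_one fun k hk => by
    rw [if_neg (Finset.ne_of_mem_erase (Finset.mem_of_mem_erase hk)),
      if_neg (Finset.ne_of_mem_erase hk), measure_univ], mul_one]

lemma pi_eq_coord_null {n : ℕ} (hatom : ∀ a : ℝ, ν {a} = 0) {i j : Fin n} (hij : i ≠ j) :
    Measure.pi (fun _ : Fin n => ν) {x | x i = x j} = 0 := by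
  have hT : Measurable (fun x : Fin n → ℝ => (x i, x j)) :=
    (measurable_pi_apply i).prodMk (measurable_pi_apply j)
  have hD : MeasurableSet {p : ℝ × ℝ | p.1 = p.2} :=
    (isClosed_eq continuous_fst continuous_snd).measurableSet
  have hmap : ν.prod ν = Measure.map (fun x : Fin n → ℝ => (x i, x j)) (Measure.pi fun _ => ν) := by
    refine Measure.prod_eq fun s t hs ht => ?_
    rw [Measure.map_apply hT (hs.prod ht)]
    have : (fun x : Fin n → ℝ => (x i, x j)) ⁻¹' (s ×ˢ t) = {x | x i ∈ s ∧ x j ∈ t} := rfl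
    rw [this, pi_pair_mem ν hs ht hij]
  have : {x : Fin n → ℝ | x i = x j} = (fun x : Fin n → ℝ => (x i, x j)) ⁻¹' {p | p.1 = p.2} := rfl
  rw [this, ← Measure.map_apply hT hD, ← hmap]
  rw [Measure.prod_apply hD]
  have : ∀ a : ℝ, ν (Prod.mk a ⁻¹' {p : ℝ × ℝ | p.1 = p.2}) = 0 := by
    intro a
    have : Prod.mk a ⁻¹' {p : ℝ × ℝ | p.1 = p.2} = {a} := by ext b; simp [eq_comm]
    rw [this]; exact hatom a
  simp only [this]
  simp

lemma pi_not_injective_null {n : ℕ} (hatom : ∀ a : ℝ, ν {a} = 0) :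
    Measure.pi (fun _ : Fin n => ν) {x | ¬ Function.Injective x} = 0 := by
  have hsub : {x : Fin n → ℝ | ¬ Function.Injective x}
      ⊆ ⋃ p : Fin n × Fin n, {x | p.1 ≠ p.2 ∧ x p.1 = x p.2} := by
    intro x hx
    simp only [Set.mem_setOf_eq, Function.Injective, not_forall] at hx
    obtain ⟨i, j, hxy, hne⟩ := hx
    exact Set.mem_iUnion.2 ⟨(i, j), hne, hxy⟩
  refine measure_mono_null hsub (measure_iUnion_null fun p => ?_)
  by_cases hp : p.1 = p.2
  · have : {x : Fin n → ℝ | p.1 ≠ p.2 ∧ x p.1 = x p.2} = ∅ := by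
      ext x; simp [hp]
    simp [this]
  · refine measure_mono_null (fun x hx => hx.2) (pi_eq_coord_null ν hatom hp)

end helpers


lemma gaussianPDFReal_one_eq (m x : ℝ) :
    gaussianPDFReal m 1 x = (Real.sqrt (2 * π))⁻¹ * Real.exp (-(x - m)^2 / 2) := by
  simp [gaussianPDFReal]

lemma sqrt_two_pi_ge_one : (1:ℝ) ≤ Real.sqrt (2 * π) := by
  rw [show (1:ℝ) = Real.sqrt 1 by simp]
  apply Real.sqrt_le_sqrt
  nlinarith [Real.pi_gt_three]

lemma gaussian_tail_right (m b : ℝ) :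
    gaussianReal m 1 (Set.Ioi b) ≤ ENNReal.ofReal (Real.exp (1/2 + m - b)) := by
  rw [gaussianReal_apply_eq_integral m one_ne_zero]
  apply ENNReal.ofReal_le_ofReal
  have hint2 : IntegrableOn (fun x : ℝ => Real.exp (1/2 + m) * Real.exp (-1 * x)) (Set.Ioi b) :=
    (exp_neg_integrableOn_Ioi b one_pos).const_mul _
  calc ∫ x in Set.Ioi b, gaussianPDFReal m 1 x
      ≤ ∫ x in Set.Ioi b, Real.exp (1/2 + m) * Real.exp (-1 * x) := by
        apply setIntegral_mono_on (integrable_gaussianPDFReal m 1).integrableOn hint2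
          measurableSet_Ioi
        intro x _
        rw [gaussianPDFReal_one_eq, ← Real.exp_add]
        have h1 : (Real.sqrt (2 * π))⁻¹ ≤ 1 := by
          rw [inv_le_one_iff₀]; right; exact sqrt_two_pi_ge_one
        have h2 : Real.exp (-(x - m)^2 / 2) ≤ Real.exp (1/2 + m + -1 * x) := by
          apply Real.exp_le_exp.2; nlinarith [sq_nonneg (x - m - 1)]
        simpa using mul_le_mul h1 h2 (Real.exp_nonneg _) one_pos.le
    _ = Real.exp (1/2 + m) * Real.exp (-b) := by
        rw [integral_const_mul]
        congr 1
        simp only [neg_one_mul]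
        exact integral_exp_neg_Ioi b
    _ = Real.exp (1/2 + m - b) := by rw [← Real.exp_add]; ring_nf

lemma gaussian_tail_left (m b : ℝ) :
    gaussianReal m 1 (Set.Iic b) ≤ ENNReal.ofReal (Real.exp (1/2 - m + b)) := by
  rw [gaussianReal_apply_eq_integral m one_ne_zero]
  apply ENNReal.ofReal_le_ofReal
  have hint2 : IntegrableOn (fun x : ℝ => Real.exp (1/2 - m) * Real.exp x) (Set.Iic b) :=
    (integrableOn_exp_Iic b).const_mul _
  calc ∫ x in Set.Iic b, gaussianPDFReal m 1 x
      ≤ ∫ x in Set.Iic b, Real.exp (1/2 - m) * Real.exp x := by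
        apply setIntegral_mono_on (integrable_gaussianPDFReal m 1).integrableOn hint2
          measurableSet_Iic
        intro x _
        rw [gaussianPDFReal_one_eq, ← Real.exp_add]
        have h1 : (Real.sqrt (2 * π))⁻¹ ≤ 1 := by
          rw [inv_le_one_iff₀]; right; exact sqrt_two_pi_ge_one
        have h2 : Real.exp (-(x - m)^2 / 2) ≤ Real.exp (1/2 - m + x) := by
          apply Real.exp_le_exp.2; nlinarith [sq_nonneg (x - m + 1)]
        simpa using mul_le_mul h1 h2 (Real.exp_nonneg _) one_pos.le
    _ = Real.exp (1/2 - m) * Real.exp b := by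
        rw [integral_const_mul]
        congr 1
        exact integral_exp_Iic b
    _ = Real.exp (1/2 - m + b) := by rw [← Real.exp_add]

lemma gaussian_tail_abs (m b : ℝ) (hb : 0 ≤ b) :
    gaussianReal m 1 {y : ℝ | b < |y|} ≤ ENNReal.ofReal (2 * Real.exp (1/2 + |m| - b)) := by
  have hsub : {y : ℝ | b < |y|} ⊆ Set.Iic (-b) ∪ Set.Ioi b := by
    intro y hy
    simp only [Set.mem_setOf_eq] at hy
    rcases lt_abs.1 hy with h | h
    · exact Or.inr h
    · exact Or.inl (by simp only [Set.mem_Iic]; linarith)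
  calc gaussianReal m 1 {y : ℝ | b < |y|} ≤ gaussianReal m 1 (Set.Iic (-b) ∪ Set.Ioi b) :=
        measure_mono hsub
    _ ≤ gaussianReal m 1 (Set.Iic (-b)) + gaussianReal m 1 (Set.Ioi b) := measure_union_le _ _
    _ ≤ ENNReal.ofReal (Real.exp (1/2 - m + -b)) + ENNReal.ofReal (Real.exp (1/2 + m - b)) := by
        gcongr
        · exact gaussian_tail_left m (-b)
        · exact gaussian_tail_right m b
    _ ≤ ENNReal.ofReal (2 * Real.exp (1/2 + |m| - b)) := by
        rw [← ENNReal.ofReal_add (Real.exp_nonneg _) (Real.exp_nonneg _)]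
        apply ENNReal.ofReal_le_ofReal
        have h1 : Real.exp (1/2 - m + -b) ≤ Real.exp (1/2 + |m| - b) :=
          Real.exp_le_exp.2 (by cases abs_cases m <;> linarith [neg_abs_le m, le_abs_self m])
        have h2 : Real.exp (1/2 + m - b) ≤ Real.exp (1/2 + |m| - b) :=
          Real.exp_le_exp.2 (by linarith [le_abs_self m])
        linarith

lemma gaussian_interval_lower (m t : ℝ) (ht : m - 1/2 ≤ t) :
    ENNReal.ofReal ((Real.sqrt (2 * π))⁻¹ * Real.exp (-(t + 1 - m)^2 / 2))
      ≤ gaussianReal m 1 (Set.Icc t (t + 1)) := by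
  rw [gaussianReal_apply m one_ne_zero]
  have hconst : ENNReal.ofReal ((Real.sqrt (2 * π))⁻¹ * Real.exp (-(t + 1 - m)^2 / 2))
      = ∫⁻ _ in Set.Icc t (t + 1), ENNReal.ofReal ((Real.sqrt (2 * π))⁻¹ * Real.exp (-(t + 1 - m)^2 / 2)) := by
    rw [setLIntegral_const]
    rw [Real.volume_Icc]
    norm_num
  rw [hconst]
  apply setLIntegral_mono (measurable_gaussianPDF m 1)
  intro x hx
  rw [Set.mem_Icc] at hx
  unfold gaussianPDF
  apply ENNReal.ofReal_le_ofReal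
  rw [gaussianPDFReal_one_eq]
  apply mul_le_mul_of_nonneg_left _ (by positivity)
  apply Real.exp_le_exp.2
  have : (x - m)^2 ≤ (t + 1 - m)^2 := by nlinarith
  linarith

lemma gaussian_Iio_upper (m t d : ℝ) (hd0 : 0 ≤ d) (hd : ENNReal.ofReal d ≤ gaussianReal m 1 (Set.Icc t (t+1))) :
    gaussianReal m 1 (Set.Iio t) ≤ ENNReal.ofReal (1 - d) := by
  have hdisj : Disjoint (Set.Iio t) (Set.Icc t (t+1)) := by
    rw [Set.disjoint_left]
    intro a ha hb
    exact absurd hb.1 (not_le.2 ha)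
  have hsum : gaussianReal m 1 (Set.Iio t) + gaussianReal m 1 (Set.Icc t (t+1)) ≤ 1 := by
    rw [← measure_union hdisj measurableSet_Icc]
    exact prob_le_one
  have h1 : gaussianReal m 1 (Set.Iio t) ≤ 1 - ENNReal.ofReal d := by
    apply ENNReal.le_sub_of_add_le_right ENNReal.ofReal_ne_top
    calc gaussianReal m 1 (Set.Iio t) + ENNReal.ofReal d
        ≤ gaussianReal m 1 (Set.Iio t) + gaussianReal m 1 (Set.Icc t (t+1)) := by gcongr
      _ ≤ 1 := hsum
  calc gaussianReal m 1 (Set.Iio t) ≤ 1 - ENNReal.ofReal d := h1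
    _ = ENNReal.ofReal 1 - ENNReal.ofReal d := by rw [ENNReal.ofReal_one]
    _ = ENNReal.ofReal (1 - d) := (ENNReal.ofReal_sub 1 hd0).symm


open Classical in
lemma badVersion_eq (t y : ℝ) :
    badVersion t y = Real.exp (t * y - t ^ 2 / 2
      + (if y = t ∧ 0 < t then t ^ 2 / 2 * Real.exp (t ^ 2) else 0)) := by
  unfold badVersion
  split_ifs with h
  · rw [h.1]
  · rw [add_zero]

open Classical in
lemma prod_badVersion {n : ℕ} (x : Fin n → ℝ) (t : ℝ) :
    ∏ i, badVersion t (x i)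
      = Real.exp (t * (∑ i, x i) - n * (t ^ 2 / 2)
          + (Finset.univ.filter fun i => x i = t ∧ 0 < t).card * (t ^ 2 / 2 * Real.exp (t ^ 2))) := by
  simp only [badVersion_eq]
  rw [← Real.exp_sum]
  congr 1
  rw [Finset.sum_add_distrib, Finset.sum_sub_distrib]
  congr 1
  · rw [← Finset.mul_sum, Finset.sum_const]
    simp [Finset.mul_sum]
  · rw [Finset.sum_ite, Finset.sum_const_zero, add_zero, Finset.sum_const, nsmul_eq_mul]

section arith
variable {a M S B nr : ℝ}

set_option maxHeartbeats 1000000 in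
lemma case_nospike (hn0 : 0 < nr) (hB1 : 1 ≤ B) (hM2 : 2 ≤ M ^ 2) (hMpos : 0 < M)
    (hMB : M ≤ B) (hS : |S| ≤ nr * B) (hE : 100 * nr * B ^ 2 ≤ Real.exp (M ^ 2)) (t : ℝ) :
    t * S - nr * (t ^ 2 / 2) < M * S - nr * (M ^ 2 / 2) + M ^ 2 / 2 * Real.exp (M ^ 2) := by
  have hS1 := abs_le.1 hS
  have hexp_ge : Real.exp (M ^ 2) ≤ M ^ 2 / 2 * Real.exp (M ^ 2) := by
    nlinarith [Real.exp_pos (M ^ 2)]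
  have hnB2 : (0:ℝ) < nr * B ^ 2 := mul_pos hn0 (by positivity)
  have h1 : t * S - nr * (t ^ 2 / 2) ≤ S ^ 2 / (2 * nr) := by
    rw [le_div_iff₀ (by positivity)]
    nlinarith [sq_nonneg (nr * t - S)]
  have hSnM : (S - nr * M) ^ 2 ≤ (2 * nr * B) ^ 2 := by
    apply sq_le_sq'
    · nlinarith
    · nlinarith
  have h2 : S ^ 2 / (2 * nr) - M * S + nr * (M ^ 2 / 2) ≤ 2 * nr * B ^ 2 := by
    have heq : S ^ 2 / (2 * nr) - M * S + nr * (M ^ 2 / 2) = (S - nr * M) ^ 2 / (2 * nr) := by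
      field_simp
      ring
    rw [heq, div_le_iff₀ (by positivity : (0:ℝ) < 2 * nr)]
    nlinarith
  linarith

set_option maxHeartbeats 1000000 in
lemma case_far (hn0 : 0 < nr) (hB1 : 1 ≤ B) (hM2 : 2 ≤ M ^ 2) (hMpos : 0 < M)
    (hMB : M ≤ B) (hS : |S| ≤ nr * B) (hE : 100 * nr * B ^ 2 ≤ Real.exp (M ^ 2))
    (hapos : 0 < a) (haM : a < M) (haB : a ≤ B) (ha2 : a ^ 2 ≤ M ^ 2 - 1) :
    a * S - nr * (a ^ 2 / 2) + a ^ 2 / 2 * Real.exp (a ^ 2)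
      < M * S - nr * (M ^ 2 / 2) + M ^ 2 / 2 * Real.exp (M ^ 2) := by
  have hS1 := abs_le.1 hS
  have hB0 : (0:ℝ) < B := by linarith
  have hnB2 : (0:ℝ) < nr * B ^ 2 := mul_pos hn0 (by positivity)
  have hexp_ge : Real.exp (M ^ 2) ≤ M ^ 2 / 2 * Real.exp (M ^ 2) := by
    nlinarith [Real.exp_pos (M ^ 2)]
  have hR : (a - M) * S + nr * (M ^ 2 / 2) - nr * (a ^ 2 / 2) ≤ 2 * nr * B * (M - a) := by
    nlinarith [mul_nonneg (sub_nonneg.2 haM.le) (by linarith : (0:ℝ) ≤ S + nr * B),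
      mul_nonneg (mul_nonneg hn0.le (sub_nonneg.2 haM.le))
        (by linarith : (0:ℝ) ≤ 2 * B - (M + a))]
  have hfa : a ^ 2 / 2 * Real.exp (a ^ 2) ≤ M ^ 2 / 2 * Real.exp (M ^ 2) / 2 := by
    have he1 : Real.exp (a ^ 2) ≤ Real.exp (M ^ 2 - 1) := Real.exp_le_exp.2 (by linarith)
    have he3 : (2:ℝ) ≤ Real.exp 1 := by
      have := Real.add_one_le_exp 1
      linarith
    have he4 : Real.exp (M ^ 2 - 1) ≤ Real.exp (M ^ 2) / 2 := by
      rw [Real.exp_sub, div_le_div_iff₀ (Real.exp_pos 1) two_pos]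
      nlinarith [Real.exp_pos (M ^ 2)]
    have hq1 : a ^ 2 / 2 ≤ M ^ 2 / 2 := by nlinarith
    have := mul_le_mul hq1 (he1.trans he4) (Real.exp_nonneg _) (by positivity)
    nlinarith [this]
  have hRB : 2 * nr * B * (M - a) ≤ 2 * nr * B ^ 2 := by
    nlinarith [mul_nonneg (mul_nonneg hn0.le hB0.le) (by linarith : (0:ℝ) ≤ B - (M - a))]
  linarith

set_option maxHeartbeats 1000000 in
lemma case_near (hn0 : 0 < nr) (hB1 : 1 ≤ B) (hM2 : 2 ≤ M ^ 2) (hM1 : 1 ≤ M)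
    (hMB : M ≤ B) (hS : |S| ≤ nr * B) (hE : 100 * nr * B ^ 2 ≤ Real.exp (M ^ 2))
    (hapos : 0 < a) (haM : a < M) (haB : a ≤ B) (ha2 : M ^ 2 - 1 < a ^ 2) :
    a * S - nr * (a ^ 2 / 2) + a ^ 2 / 2 * Real.exp (a ^ 2)
      < M * S - nr * (M ^ 2 / 2) + M ^ 2 / 2 * Real.exp (M ^ 2) := by
  have hS1 := abs_le.1 hS
  have hR : (a - M) * S + nr * (M ^ 2 / 2) - nr * (a ^ 2 / 2) ≤ 2 * nr * B * (M - a) := by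
    nlinarith [mul_nonneg (sub_nonneg.2 haM.le) (by linarith : (0:ℝ) ≤ S + nr * B),
      mul_nonneg (mul_nonneg hn0.le (sub_nonneg.2 haM.le))
        (by linarith : (0:ℝ) ≤ 2 * B - (M + a))]
  have ha1 : 1 ≤ a := by nlinarith
  have ha1sq : 1 ≤ a ^ 2 := by nlinarith
  have haM2 : a ^ 2 < M ^ 2 := by nlinarith
  have hg : (0:ℝ) < M - a := by linarith
  have hkey : Real.exp (a ^ 2) * (M ^ 2 - a ^ 2) ≤ Real.exp (M ^ 2) - Real.exp (a ^ 2) := by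
    have h := Real.add_one_le_exp (M ^ 2 - a ^ 2)
    have hpos := Real.exp_pos (a ^ 2)
    have hmul : Real.exp (a ^ 2) * (M ^ 2 - a ^ 2 + 1)
        ≤ Real.exp (a ^ 2) * Real.exp (M ^ 2 - a ^ 2) :=
      mul_le_mul_of_nonneg_left (by linarith) hpos.le
    rw [← Real.exp_add] at hmul
    have heq : a ^ 2 + (M ^ 2 - a ^ 2) = M ^ 2 := by ring
    rw [heq] at hmul
    nlinarith
  have hea : Real.exp (M ^ 2) / 3 ≤ Real.exp (a ^ 2) := by
    have he1 : Real.exp (M ^ 2 - 1) ≤ Real.exp (a ^ 2) := Real.exp_le_exp.2 (by linarith)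
    have he2 : Real.exp 1 ≤ 3 := by
      have h9 := Real.exp_one_lt_d9
      linarith
    rw [Real.exp_sub] at he1
    have h0 := Real.exp_pos (M ^ 2)
    have h3 : Real.exp (M ^ 2) / 3 ≤ Real.exp (M ^ 2) / Real.exp 1 := by
      rw [div_le_div_iff₀ three_pos (Real.exp_pos 1)]
      nlinarith
    linarith
  have hfdiff : Real.exp (M ^ 2) / 6 * ((M - a) * M)
      ≤ M ^ 2 / 2 * Real.exp (M ^ 2) - a ^ 2 / 2 * Real.exp (a ^ 2) := by
    have h1 : a ^ 2 / 2 * (Real.exp (M ^ 2) - Real.exp (a ^ 2))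
        ≤ M ^ 2 / 2 * Real.exp (M ^ 2) - a ^ 2 / 2 * Real.exp (a ^ 2) := by
      nlinarith [mul_nonneg (by linarith : (0:ℝ) ≤ M ^ 2 - a ^ 2) (Real.exp_pos (M ^ 2)).le]
    have hA : Real.exp (M ^ 2) / 6 ≤ a ^ 2 / 2 * Real.exp (a ^ 2) := by
      have h' : Real.exp (a ^ 2) / 2 ≤ a ^ 2 / 2 * Real.exp (a ^ 2) := by
        nlinarith [mul_nonneg (by linarith : (0:ℝ) ≤ a ^ 2 - 1) (Real.exp_pos (a ^ 2)).le]
      linarith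
    have hpos2 : (0:ℝ) ≤ (M - a) * (M + a) := by nlinarith
    have hprod : (M - a) * M ≤ (M - a) * (M + a) := by nlinarith
    have hstep1 : Real.exp (M ^ 2) / 6 * ((M - a) * M)
        ≤ Real.exp (M ^ 2) / 6 * ((M - a) * (M + a)) :=
      mul_le_mul_of_nonneg_left hprod (by positivity)
    have hstep2 : Real.exp (M ^ 2) / 6 * ((M - a) * (M + a))
        ≤ a ^ 2 / 2 * Real.exp (a ^ 2) * ((M - a) * (M + a)) :=
      mul_le_mul_of_nonneg_right hA hpos2
    have hstep3 : a ^ 2 / 2 * Real.exp (a ^ 2) * ((M - a) * (M + a))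
        = a ^ 2 / 2 * (Real.exp (a ^ 2) * (M ^ 2 - a ^ 2)) := by ring
    have hstep4 : a ^ 2 / 2 * (Real.exp (a ^ 2) * (M ^ 2 - a ^ 2))
        ≤ a ^ 2 / 2 * (Real.exp (M ^ 2) - Real.exp (a ^ 2)) :=
      mul_le_mul_of_nonneg_left hkey (by positivity)
    linarith [hstep1, hstep2, hstep3.le, hstep3.ge, hstep4, h1]
  have hfinal : 2 * nr * B * (M - a) < Real.exp (M ^ 2) / 6 * ((M - a) * M) := by
    have e6 : Real.exp (M ^ 2) / 6 * 1 ≤ Real.exp (M ^ 2) / 6 * M :=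
      mul_le_mul_of_nonneg_left hM1 (by positivity)
    have hlt : 2 * nr * B < Real.exp (M ^ 2) / 6 * M := by
      nlinarith [mul_nonneg hn0.le (by nlinarith : (0:ℝ) ≤ B ^ 2 - B)]
    nlinarith [mul_lt_mul_of_pos_right hlt hg]
  linarith

end arith

open Classical in
lemma det_max {n : ℕ} (x : Fin n → ℝ) (B : ℝ) (hn : 1 ≤ n)
    (hinj : Function.Injective x) (hB : ∀ i, |x i| ≤ B) (hB1 : 1 ≤ B)
    (hM : Real.sqrt 2 ≤ ⨆ i, x i)
    (hE : 100 * n * B ^ 2 ≤ Real.exp ((⨆ i, x i) ^ 2)) :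
    ∀ θ' : ℝ, θ' ≠ (⨆ i, x i) →
      ∏ i, badVersion θ' (x i) < ∏ i, badVersion (⨆ i, x i) (x i) := by
  have hne : Nonempty (Fin n) := Fin.pos_iff_nonempty.1 hn
  set M := ⨆ i, x i with hMdef
  obtain ⟨j₀, hj₀⟩ := Finite.exists_max x
  have hMle : ∀ i, x i ≤ M := fun i => le_ciSup (Finite.bddAbove_range x) i
  have hMeq : M = x j₀ := le_antisymm (ciSup_le hj₀) (hMle j₀)
  have hMpos : 0 < M := lt_of_lt_of_le (Real.sqrt_pos.2 two_pos) hM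
  have hM2 : 2 ≤ M ^ 2 := by
    have h := pow_le_pow_left₀ (Real.sqrt_nonneg 2) hM 2
    rwa [Real.sq_sqrt (by norm_num : (0:ℝ) ≤ 2)] at h
  have hM1 : 1 ≤ M := by nlinarith
  have hMB : M ≤ B := hMeq ▸ le_trans (le_abs_self _) (hB j₀)
  have hn0 : (0:ℝ) < n := by exact_mod_cast hn
  set S := ∑ i, x i with hSdef
  have hS : |S| ≤ n * B := by
    calc |S| ≤ ∑ i, |x i| := Finset.abs_sum_le_sum_abs _ _
      _ ≤ ∑ _i : Fin n, B := Finset.sum_le_sum fun i _ => hB i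
      _ = n * B := by rw [Finset.sum_const, Finset.card_univ, Fintype.card_fin, nsmul_eq_mul]
  have hcard : ∀ t : ℝ, (Finset.univ.filter fun i => x i = t ∧ 0 < t).card ≤ 1 := by
    intro t
    apply Finset.card_le_one.2
    intro i hi j hj
    rw [Finset.mem_filter] at hi hj
    exact hinj (hi.2.1.trans hj.2.1.symm)
  have hcardM : 1 ≤ (Finset.univ.filter fun i => x i = M ∧ 0 < M).card := by
    apply Finset.card_pos.2
    exact ⟨j₀, Finset.mem_filter.2 ⟨Finset.mem_univ _, hMeq.symm, hMpos⟩⟩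
  have hexpM : 100 * n * B ^ 2 ≤ Real.exp (M ^ 2) := hE
  intro θ' hθ'
  rw [prod_badVersion, prod_badVersion]
  rw [Real.exp_lt_exp]
  rw [← hSdef]
  clear_value M S
  have hfM0 : (0:ℝ) ≤ M ^ 2 / 2 * Real.exp (M ^ 2) := by positivity
  have hc2 : (1:ℝ) ≤ ((Finset.univ.filter fun i => x i = M ∧ 0 < M).card : ℝ) := by
    exact_mod_cast hcardM
  have hsuff : θ' * S - n * (θ' ^ 2 / 2)
      + ((Finset.univ.filter fun i => x i = θ' ∧ 0 < θ').card : ℝ)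
        * (θ' ^ 2 / 2 * Real.exp (θ' ^ 2))
      < M * S - n * (M ^ 2 / 2) + M ^ 2 / 2 * Real.exp (M ^ 2) → θ' * S - n * (θ' ^ 2 / 2)
      + ((Finset.univ.filter fun i => x i = θ' ∧ 0 < θ').card : ℝ)
        * (θ' ^ 2 / 2 * Real.exp (θ' ^ 2))
      < M * S - n * (M ^ 2 / 2) + ((Finset.univ.filter fun i => x i = M ∧ 0 < M).card : ℝ)
        * (M ^ 2 / 2 * Real.exp (M ^ 2)) := by
    intro h
    have hh : M ^ 2 / 2 * Real.exp (M ^ 2)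
        ≤ ((Finset.univ.filter fun i => x i = M ∧ 0 < M).card : ℝ)
          * (M ^ 2 / 2 * Real.exp (M ^ 2)) := le_mul_of_one_le_left hfM0 hc2
    linarith
  apply hsuff
  have hc1 : (Finset.univ.filter fun i => x i = θ' ∧ 0 < θ').card ≤ 1 := hcard θ'
  interval_cases h : (Finset.univ.filter fun i => x i = θ' ∧ 0 < θ').card
  · simp only [Nat.cast_zero, zero_mul, add_zero]
    exact case_nospike hn0 hB1 hM2 hMpos hMB hS hexpM θ'
  · have hmem : ∃ j, x j = θ' ∧ 0 < θ' := by
      have hpos : 0 < (Finset.univ.filter fun i => x i = θ' ∧ 0 < θ').card := by omega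
      obtain ⟨j, hj⟩ := Finset.card_pos.1 hpos
      exact ⟨j, (Finset.mem_filter.1 hj).2⟩
    obtain ⟨j, hja, hapos⟩ := hmem
    simp only [Nat.cast_one, one_mul]
    have haM : θ' < M := lt_of_le_of_ne (hja ▸ hMle j) hθ'
    have haB : θ' ≤ B := hja ▸ le_trans (le_abs_self _) (hB j)
    by_cases ha2 : θ' ^ 2 ≤ M ^ 2 - 1
    · exact case_far hn0 hB1 hM2 hMpos hMB hS hexpM hapos haM haB ha2
    · push_neg at ha2
      exact case_near hn0 hB1 hM2 hM1 hMB hS hexpM hapos haM haB ha2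


noncomputable def tN (n : ℕ) : ℝ := Real.sqrt (6/5 * Real.log n)
noncomputable def bN (θ : ℝ) (n : ℕ) : ℝ := 2 * Real.log n + (|θ| + 2)
noncomputable def dN (θ : ℝ) (n : ℕ) : ℝ :=
  (Real.sqrt (2 * π))⁻¹ * Real.exp (-(tN n + 1 - θ)^2 / 2)

lemma sqrt_two_pi_ge_one' : (1:ℝ) ≤ Real.sqrt (2 * π) := by
  rw [show (1:ℝ) = Real.sqrt 1 by simp]
  apply Real.sqrt_le_sqrt
  nlinarith [Real.pi_gt_three]

lemma dN_nonneg (θ : ℝ) (n : ℕ) : 0 ≤ dN θ n := by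
  unfold dN; positivity

lemma dN_le_one (θ : ℝ) (n : ℕ) : dN θ n ≤ 1 := by
  unfold dN
  have h1 : (Real.sqrt (2 * π))⁻¹ ≤ 1 := by
    rw [inv_le_one_iff₀]; right; exact sqrt_two_pi_ge_one'
  have h2 : Real.exp (-(tN n + 1 - θ)^2 / 2) ≤ 1 := by
    rw [show (1:ℝ) = Real.exp 0 by simp, Real.exp_le_exp]
    nlinarith [sq_nonneg (tN n + 1 - θ)]
  nlinarith [Real.exp_nonneg (-(tN n + 1 - θ)^2 / 2)]

lemma tendsto_log_nat : Tendsto (fun n : ℕ => Real.log n) atTop atTop :=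
  Real.tendsto_log_atTop.comp tendsto_natCast_atTop_atTop

lemma tendsto_sqrt_atTop : Tendsto Real.sqrt atTop atTop := by
  refine tendsto_atTop_atTop.2 fun b => ⟨max 0 b ^ 2, fun a ha => ?_⟩
  calc b ≤ max 0 b := le_max_right _ _
    _ = Real.sqrt ((max 0 b)^2) := (Real.sqrt_sq (le_max_left _ _)).symm
    _ ≤ Real.sqrt a := Real.sqrt_le_sqrt ha

lemma tendsto_tN : Tendsto tN atTop atTop := by
  apply _root_.tendsto_sqrt_atTop.comp
  exact (tendsto_log_nat.const_mul_atTop (by norm_num : (0:ℝ) < 6/5))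

lemma tendsto_mul_dN (θ : ℝ) : Tendsto (fun n : ℕ => (n:ℝ) * dN θ n) atTop atTop := by
  set c : ℝ := 1 - θ with hc
  -- the clean function of u = log n
  have hψ : Tendsto (fun u : ℝ =>
      Real.sqrt u * (2/5 * Real.sqrt u + -(c * Real.sqrt (6/5))) + -(c^2/2)) atTop atTop := by
    apply tendsto_atTop_add_const_right
    apply Tendsto.atTop_mul_atTop₀ _root_.tendsto_sqrt_atTop
    apply tendsto_atTop_add_const_right
    exact _root_.tendsto_sqrt_atTop.const_mul_atTop (by norm_num : (0:ℝ) < 2/5)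
  have hexp : Tendsto (fun u : ℝ =>
      (Real.sqrt (2 * π))⁻¹ * Real.exp (u - (Real.sqrt (6/5 * u) + c)^2 / 2)) atTop atTop := by
    apply Tendsto.const_mul_atTop (by positivity : (0:ℝ) < (Real.sqrt (2 * π))⁻¹)
    apply Real.tendsto_exp_atTop.comp
    apply Tendsto.congr' _ hψ
    filter_upwards [eventually_ge_atTop (0:ℝ)] with u hu
    have h1 : Real.sqrt (6/5 * u) = Real.sqrt (6/5) * Real.sqrt u := Real.sqrt_mul (by norm_num) u
    have h2 : Real.sqrt u * Real.sqrt u = u := Real.mul_self_sqrt hu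
    have h3 : Real.sqrt (6/5) * Real.sqrt (6/5) = 6/5 := Real.mul_self_sqrt (by norm_num)
    rw [h1]
    ring_nf
    nlinarith [h2, h3]
  apply Tendsto.congr' _ (hexp.comp tendsto_log_nat)
  filter_upwards [eventually_ge_atTop 1] with n hn
  have hn0 : (0:ℝ) < n := by exact_mod_cast hn
  have hexplog : Real.exp (Real.log n) = n := Real.exp_log hn0
  simp only [Function.comp_apply]
  have harg : Real.sqrt (6/5 * Real.log (n:ℝ)) + c = tN n + 1 - θ := by
    unfold tN; rw [hc]; ring
  rw [harg]
  unfold dN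
  rw [show Real.log (n:ℝ) - (tN n + 1 - θ)^2/2
      = Real.log (n:ℝ) + (-(tN n + 1 - θ)^2/2) by ring, Real.exp_add, hexplog]
  ring

lemma tendsto_pow_one_sub_dN (θ : ℝ) :
    Tendsto (fun n : ℕ => (1 - dN θ n)^n) atTop (nhds 0) := by
  have hub : ∀ n : ℕ, (1 - dN θ n)^n ≤ Real.exp (-((n:ℝ) * dN θ n)) := by
    intro n
    have h1 : 1 - dN θ n ≤ Real.exp (-(dN θ n)) := by
      have := Real.add_one_le_exp (-(dN θ n))
      linarith
    have h0 : 0 ≤ 1 - dN θ n := by linarith [dN_le_one θ n]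
    calc (1 - dN θ n)^n ≤ (Real.exp (-(dN θ n)))^n := pow_le_pow_left₀ h0 h1 n
      _ = Real.exp ((n:ℝ) * -(dN θ n)) := (Real.exp_nat_mul _ n).symm
      _ = Real.exp (-((n:ℝ) * dN θ n)) := by ring_nf
  have hlb : ∀ n : ℕ, 0 ≤ (1 - dN θ n)^n := fun n =>
    pow_nonneg (by linarith [dN_le_one θ n]) n
  have hto : Tendsto (fun n : ℕ => Real.exp (-((n:ℝ) * dN θ n))) atTop (nhds 0) := by
    apply Real.tendsto_exp_atBot.comp
    exact tendsto_neg_atTop_atBot.comp (tendsto_mul_dN θ)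
  exact tendsto_of_tendsto_of_tendsto_of_le_of_le tendsto_const_nhds hto hlb hub

lemma tendsto_nB (θ : ℝ) :
    Tendsto (fun n : ℕ => (n:ℝ) * (2 * Real.exp (1/2 + |θ| - bN θ n))) atTop (nhds 0) := by
  apply Tendsto.congr' _ (tendsto_const_div_atTop_nhds_zero_nat (2 * Real.exp (-3/2)))
  filter_upwards [eventually_ge_atTop 1] with n hn
  have hn0 : (0:ℝ) < n := by exact_mod_cast hn
  unfold bN
  rw [show 1/2 + |θ| - (2 * Real.log n + (|θ| + 2)) = -3/2 + (-2) * Real.log n by ring,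
    Real.exp_add]
  rw [show ((-2:ℝ)) * Real.log n = Real.log ((n:ℝ)^(-2:ℝ)) by rw [Real.log_rpow hn0]]
  rw [Real.exp_log (by positivity)]
  rw [Real.rpow_neg hn0.le, show ((2:ℝ)) = ((2:ℕ):ℝ) by norm_num, Real.rpow_natCast]
  field_simp

lemma eventually_conditions (θ : ℝ) : ∀ᶠ n : ℕ in atTop,
    1 ≤ n ∧ Real.sqrt 2 ≤ tN n ∧ θ - 1/2 ≤ tN n ∧ θ + 1 < tN n ∧ 1 ≤ bN θ n ∧
    100 * n * (bN θ n)^2 ≤ Real.exp ((tN n)^2) := by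
  have h1 : ∀ᶠ n : ℕ in atTop, 1 ≤ n := eventually_ge_atTop 1
  have h2 : ∀ᶠ n : ℕ in atTop, Real.sqrt 2 ≤ tN n := tendsto_tN.eventually_ge_atTop _
  have h3 : ∀ᶠ n : ℕ in atTop, θ - 1/2 ≤ tN n := tendsto_tN.eventually_ge_atTop _
  have h4 : ∀ᶠ n : ℕ in atTop, θ + 1 < tN n := tendsto_tN.eventually_gt_atTop _
  have h5 : ∀ᶠ n : ℕ in atTop, 1 ≤ bN θ n := by
    filter_upwards [eventually_ge_atTop 1] with n hn
    have : (0:ℝ) ≤ Real.log n := Real.log_nonneg (by exact_mod_cast hn)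
    unfold bN
    have := abs_nonneg θ
    linarith
  -- the key growth condition
  have hgrow : ∀ᶠ u : ℝ in atTop, 100 * (2 * u + (|θ| + 2))^2 ≤ Real.exp (u/5) := by
    have hcomp : Tendsto (fun u : ℝ => Real.exp (u/5) / (u/5)^2) atTop atTop := by
      have := (Real.tendsto_exp_div_pow_atTop 2).comp
        (tendsto_id.atTop_div_const (by norm_num : (0:ℝ) < 5))
      exact this
    filter_upwards [hcomp.eventually_ge_atTop 562500,
      eventually_ge_atTop (max 1 (|θ| + 2))] with u hu hu1
    have hu1' : 1 ≤ u := le_trans (le_max_left _ _) hu1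
    have hu2 : |θ| + 2 ≤ u := le_trans (le_max_right _ _) hu1
    have hpos : (0:ℝ) < (u/5)^2 := by positivity
    rw [le_div_iff₀ hpos] at hu
    nlinarith [abs_nonneg θ]
  have h6 : ∀ᶠ n : ℕ in atTop, 100 * n * (bN θ n)^2 ≤ Real.exp ((tN n)^2) := by
    filter_upwards [tendsto_log_nat.eventually hgrow, eventually_ge_atTop 1] with n hg hn
    have hn0 : (0:ℝ) < n := by exact_mod_cast hn
    have hlog0 : (0:ℝ) ≤ Real.log n := Real.log_nonneg (by exact_mod_cast hn)
    have htsq : (tN n)^2 = 6/5 * Real.log n := by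
      unfold tN
      rw [Real.sq_sqrt (by linarith)]
    rw [htsq, show (6:ℝ)/5 * Real.log n = Real.log n + (Real.log n)/5 by ring, Real.exp_add,
      Real.exp_log hn0]
    unfold bN
    calc 100 * (n:ℝ) * (2 * Real.log n + (|θ| + 2))^2
        = (n:ℝ) * (100 * (2 * Real.log n + (|θ| + 2))^2) := by ring
      _ ≤ (n:ℝ) * Real.exp ((Real.log n)/5) := by
          apply mul_le_mul_of_nonneg_left hg hn0.le
  filter_upwards [h1, h2, h3, h4, h5, h6] with n a b c d e f
  exact ⟨a, b, c, d, e, f⟩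


lemma measure_sup_lt (θ : ℝ) (n : ℕ) (ht : θ - 1/2 ≤ tN n) :
    (Measure.pi fun _ : Fin n => gaussianReal θ 1) {x : Fin n → ℝ | (⨆ i, x i) < tN n}
      ≤ ENNReal.ofReal ((1 - dN θ n)^n) := by
  have hd : ENNReal.ofReal (dN θ n) ≤ gaussianReal θ 1 (Set.Icc (tN n) (tN n + 1)) :=
    gaussian_interval_lower θ (tN n) ht
  have hIio : gaussianReal θ 1 (Set.Iio (tN n)) ≤ ENNReal.ofReal (1 - dN θ n) :=
    gaussian_Iio_upper θ (tN n) (dN θ n) (dN_nonneg θ n) hd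
  have hsub : {x : Fin n → ℝ | (⨆ i, x i) < tN n}
      ⊆ Set.pi Set.univ (fun _ : Fin n => Set.Iio (tN n)) := by
    intro x hx k _
    exact lt_of_le_of_lt (le_ciSup (Finite.bddAbove_range x) k) hx
  calc (Measure.pi fun _ : Fin n => gaussianReal θ 1) {x : Fin n → ℝ | (⨆ i, x i) < tN n}
      ≤ (Measure.pi fun _ : Fin n => gaussianReal θ 1)
          (Set.pi Set.univ (fun _ : Fin n => Set.Iio (tN n))) := measure_mono hsub
    _ = ∏ _i : Fin n, gaussianReal θ 1 (Set.Iio (tN n)) := Measure.pi_pi _ _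
    _ = (gaussianReal θ 1 (Set.Iio (tN n)))^n := by
        rw [Finset.prod_const, Finset.card_univ, Fintype.card_fin]
    _ ≤ (ENNReal.ofReal (1 - dN θ n))^n := pow_le_pow_left₀ zero_le hIio n
    _ = ENNReal.ofReal ((1 - dN θ n)^n) :=
        (ENNReal.ofReal_pow (by linarith [dN_le_one θ n]) n).symm

lemma measure_abs_gt (θ B : ℝ) (hB : 0 ≤ B) (n : ℕ) :
    (Measure.pi fun _ : Fin n => gaussianReal θ 1) {x : Fin n → ℝ | ¬ ∀ i, |x i| ≤ B}
      ≤ ENNReal.ofReal ((n:ℝ) * (2 * Real.exp (1/2 + |θ| - B))) := by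
  have hsmeas : MeasurableSet {y : ℝ | B < |y|} :=
    measurableSet_lt measurable_const continuous_abs.measurable
  have hsub : {x : Fin n → ℝ | ¬ ∀ i, |x i| ≤ B}
      ⊆ ⋃ i : Fin n, {x : Fin n → ℝ | x i ∈ {y : ℝ | B < |y|}} := by
    intro x hx
    push_neg at hx
    obtain ⟨i, hi⟩ := hx
    exact Set.mem_iUnion.2 ⟨i, hi⟩
  calc (Measure.pi fun _ : Fin n => gaussianReal θ 1) {x : Fin n → ℝ | ¬ ∀ i, |x i| ≤ B}
      ≤ ∑ i : Fin n, (Measure.pi fun _ : Fin n => gaussianReal θ 1)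
          {x : Fin n → ℝ | x i ∈ {y : ℝ | B < |y|}} :=
        (measure_mono hsub).trans (measure_iUnion_fintype_le _ _)
    _ = ∑ _i : Fin n, gaussianReal θ 1 {y : ℝ | B < |y|} := by
        apply Finset.sum_congr rfl
        intro i _
        exact pi_eval_mem (gaussianReal θ 1) hsmeas i
    _ ≤ ∑ _i : Fin n, ENNReal.ofReal (2 * Real.exp (1/2 + |θ| - B)) := by
        apply Finset.sum_le_sum
        intro i _
        exact gaussian_tail_abs θ B hB
    _ = ENNReal.ofReal ((n:ℝ) * (2 * Real.exp (1/2 + |θ| - B))) := by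
        rw [Finset.sum_const, Finset.card_univ, Fintype.card_fin, nsmul_eq_mul,
          ← ENNReal.ofReal_natCast n, ← ENNReal.ofReal_mul (by positivity)]

/-- For i.i.d. observations of law `N(θ,1)`, with probability tending to one
the likelihood associated with the density versions `p_θ = badVersion θ` is strictly
maximized at `θ' = X_{(n)} = max{X₁,…,Xₙ}`; hence the maximum-likelihood estimator for
these versions equals `X_{(n)}` with probability tending to one, and is not consistent
(`|X_{(n)} − θ| > 1` with probability tending to one). -/
theorem bad_density_versions_make_mle_inconsistent (θ : ℝ) :
    Tendsto (fun n : ℕ =>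
      (Measure.pi fun _ : Fin n => gaussianReal θ 1)
        {x : Fin n → ℝ | ∀ θ' : ℝ, θ' ≠ (⨆ i, x i) →
          ∏ i, badVersion θ' (x i) < ∏ i, badVersion (⨆ i, x i) (x i)})
      atTop (nhds 1) ∧
    Tendsto (fun n : ℕ =>
      (Measure.pi fun _ : Fin n => gaussianReal θ 1)
        {x : Fin n → ℝ | 1 < |(⨆ i, x i) - θ|})
      atTop (nhds 1) := by
  have hatom : ∀ a : ℝ, gaussianReal θ 1 {a} = 0 := fun a =>
    gaussianReal_absolutelyContinuous θ one_ne_zero (measure_singleton a)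
  set β₂ : ℕ → ℝ≥0∞ := fun n => ENNReal.ofReal ((n:ℝ) * (2 * Real.exp (1/2 + |θ| - bN θ n)))
    with hβ₂
  set β₃ : ℕ → ℝ≥0∞ := fun n => ENNReal.ofReal ((1 - dN θ n)^n) with hβ₃
  have hβ₂0 : Tendsto β₂ atTop (nhds 0) := by
    rw [hβ₂]
    have := (ENNReal.continuous_ofReal.tendsto 0).comp (tendsto_nB θ)
    simpa only [ENNReal.ofReal_zero, Function.comp_def] using this
  have hβ₃0 : Tendsto β₃ atTop (nhds 0) := by
    rw [hβ₃]
    have := (ENNReal.continuous_ofReal.tendsto 0).comp (tendsto_pow_one_sub_dN θ)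
    simpa only [ENNReal.ofReal_zero, Function.comp_def] using this
  have hone : ∀ n : ℕ, (Measure.pi fun _ : Fin n => gaussianReal θ 1) Set.univ = 1 :=
    fun n => measure_univ
  constructor
  · -- part 1
    have hlow : ∀ᶠ n : ℕ in atTop,
        1 - (β₂ n + β₃ n) ≤ (Measure.pi fun _ : Fin n => gaussianReal θ 1)
          {x : Fin n → ℝ | ∀ θ' : ℝ, θ' ≠ (⨆ i, x i) →
            ∏ i, badVersion θ' (x i) < ∏ i, badVersion (⨆ i, x i) (x i)} := by
      filter_upwards [eventually_conditions θ] with n hcond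
      obtain ⟨hn1, hsqrt2, hhalf, hθ1, hB1, hE⟩ := hcond
      set G : Set (Fin n → ℝ) := {x | Function.Injective x} ∩ {x | ∀ i, |x i| ≤ bN θ n}
        ∩ {x | tN n ≤ ⨆ i, x i} with hG
      have hGsub : G ⊆ {x : Fin n → ℝ | ∀ θ' : ℝ, θ' ≠ (⨆ i, x i) →
          ∏ i, badVersion θ' (x i) < ∏ i, badVersion (⨆ i, x i) (x i)} := by
        rintro x ⟨⟨hinj, hBx⟩, hsup⟩
        have hM : Real.sqrt 2 ≤ ⨆ i, x i := le_trans hsqrt2 hsup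
        have hEx : 100 * n * (bN θ n)^2 ≤ Real.exp ((⨆ i, x i)^2) := by
          refine le_trans hE (Real.exp_le_exp.2 ?_)
          have h0 : 0 ≤ tN n := Real.sqrt_nonneg _
          exact pow_le_pow_left₀ h0 hsup 2
        exact det_max x (bN θ n) hn1 hinj hBx hB1 hM hEx
      have hcompl : (Measure.pi fun _ : Fin n => gaussianReal θ 1) Gᶜ ≤ β₂ n + β₃ n := by
        have hGc : Gᶜ ⊆ ({x : Fin n → ℝ | ¬ Function.Injective x}
            ∪ {x : Fin n → ℝ | ¬ ∀ i, |x i| ≤ bN θ n})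
            ∪ {x : Fin n → ℝ | (⨆ i, x i) < tN n} := by
          intro x hx
          rw [hG] at hx
          simp only [Set.mem_compl_iff, Set.mem_inter_iff, Set.mem_setOf_eq, not_and_or] at hx
          rcases hx with (h | h) | h
          · exact Or.inl (Or.inl h)
          · exact Or.inl (Or.inr h)
          · exact Or.inr (by simpa [not_le] using h)
        calc (Measure.pi fun _ : Fin n => gaussianReal θ 1) Gᶜ
            ≤ (Measure.pi fun _ : Fin n => gaussianReal θ 1)
                ({x : Fin n → ℝ | ¬ Function.Injective x}
                  ∪ {x : Fin n → ℝ | ¬ ∀ i, |x i| ≤ bN θ n})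
              + (Measure.pi fun _ : Fin n => gaussianReal θ 1)
                {x : Fin n → ℝ | (⨆ i, x i) < tN n} :=
              (measure_mono hGc).trans (measure_union_le _ _)
          _ ≤ ((Measure.pi fun _ : Fin n => gaussianReal θ 1)
                {x : Fin n → ℝ | ¬ Function.Injective x}
              + (Measure.pi fun _ : Fin n => gaussianReal θ 1)
                {x : Fin n → ℝ | ¬ ∀ i, |x i| ≤ bN θ n})
              + (Measure.pi fun _ : Fin n => gaussianReal θ 1)
                {x : Fin n → ℝ | (⨆ i, x i) < tN n} := by
              gcongr
              exact measure_union_le _ _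
          _ ≤ (0 + β₂ n) + β₃ n := by
              gcongr
              · exact le_of_eq (pi_not_injective_null (gaussianReal θ 1) hatom)
              · exact measure_abs_gt θ (bN θ n) (by linarith) n
              · exact measure_sup_lt θ n hhalf
          _ = β₂ n + β₃ n := by rw [zero_add]
      have huniv : (1:ℝ≥0∞) ≤ (Measure.pi fun _ : Fin n => gaussianReal θ 1) G
          + (β₂ n + β₃ n) := by
        calc (1:ℝ≥0∞) = (Measure.pi fun _ : Fin n => gaussianReal θ 1) Set.univ := (hone n).symm
          _ ≤ (Measure.pi fun _ : Fin n => gaussianReal θ 1) (G ∪ Gᶜ) := by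
              rw [Set.union_compl_self]
          _ ≤ (Measure.pi fun _ : Fin n => gaussianReal θ 1) G
              + (Measure.pi fun _ : Fin n => gaussianReal θ 1) Gᶜ := measure_union_le _ _
          _ ≤ _ := by gcongr
      calc 1 - (β₂ n + β₃ n) ≤ (Measure.pi fun _ : Fin n => gaussianReal θ 1) G :=
            tsub_le_iff_right.2 huniv
        _ ≤ _ := measure_mono hGsub
    have hup : ∀ᶠ n : ℕ in atTop,
        (Measure.pi fun _ : Fin n => gaussianReal θ 1)
          {x : Fin n → ℝ | ∀ θ' : ℝ, θ' ≠ (⨆ i, x i) →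
            ∏ i, badVersion θ' (x i) < ∏ i, badVersion (⨆ i, x i) (x i)} ≤ 1 :=
      Filter.Eventually.of_forall fun n => prob_le_one
    have hlim : Tendsto (fun n => 1 - (β₂ n + β₃ n)) atTop (nhds 1) := by
      have hsum : Tendsto (fun n => β₂ n + β₃ n) atTop (nhds 0) := by
        simpa using hβ₂0.add hβ₃0
      have := ENNReal.Tendsto.sub (tendsto_const_nhds (x := (1:ℝ≥0∞))) hsum
        (Or.inl ENNReal.one_ne_top)
      simpa using this
    exact tendsto_of_tendsto_of_tendsto_of_le_of_le' hlim
      (tendsto_const_nhds (x := (1:ℝ≥0∞))) hlow hup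
  · -- part 2
    have hlow : ∀ᶠ n : ℕ in atTop,
        1 - β₃ n ≤ (Measure.pi fun _ : Fin n => gaussianReal θ 1)
          {x : Fin n → ℝ | 1 < |(⨆ i, x i) - θ|} := by
      filter_upwards [eventually_conditions θ] with n hcond
      obtain ⟨hn1, hsqrt2, hhalf, hθ1, hB1, hE⟩ := hcond
      have hGsub : {x : Fin n → ℝ | tN n ≤ ⨆ i, x i}
          ⊆ {x : Fin n → ℝ | 1 < |(⨆ i, x i) - θ|} := by
        intro x hx
        have h1 : 1 < (⨆ i, x i) - θ := by
          have := hx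
          simp only [Set.mem_setOf_eq] at this ⊢
          linarith
        exact lt_of_lt_of_le h1 (le_abs_self _)
      have huniv : (1:ℝ≥0∞) ≤ (Measure.pi fun _ : Fin n => gaussianReal θ 1)
          {x : Fin n → ℝ | tN n ≤ ⨆ i, x i} + β₃ n := by
        calc (1:ℝ≥0∞) = (Measure.pi fun _ : Fin n => gaussianReal θ 1) Set.univ := (hone n).symm
          _ ≤ (Measure.pi fun _ : Fin n => gaussianReal θ 1)
                ({x : Fin n → ℝ | tN n ≤ ⨆ i, x i} ∪ {x : Fin n → ℝ | tN n ≤ ⨆ i, x i}ᶜ) := by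
              rw [Set.union_compl_self]
          _ ≤ (Measure.pi fun _ : Fin n => gaussianReal θ 1)
                {x : Fin n → ℝ | tN n ≤ ⨆ i, x i}
              + (Measure.pi fun _ : Fin n => gaussianReal θ 1)
                {x : Fin n → ℝ | tN n ≤ ⨆ i, x i}ᶜ := measure_union_le _ _
          _ ≤ _ := by
              gcongr
              have hcc : {x : Fin n → ℝ | tN n ≤ ⨆ i, x i}ᶜ
                  = {x : Fin n → ℝ | (⨆ i, x i) < tN n} := by
                ext x
                simp [not_le]
              rw [hcc]
              exact measure_sup_lt θ n hhalf
      calc 1 - β₃ n ≤ (Measure.pi fun _ : Fin n => gaussianReal θ 1)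
            {x : Fin n → ℝ | tN n ≤ ⨆ i, x i} := tsub_le_iff_right.2 huniv
        _ ≤ _ := measure_mono hGsub
    have hup : ∀ᶠ n : ℕ in atTop,
        (Measure.pi fun _ : Fin n => gaussianReal θ 1)
          {x : Fin n → ℝ | 1 < |(⨆ i, x i) - θ|} ≤ 1 :=
      Filter.Eventually.of_forall fun n => prob_le_one
    have hlim : Tendsto (fun n => 1 - β₃ n) atTop (nhds 1) := by
      have := ENNReal.Tendsto.sub (tendsto_const_nhds (x := (1:ℝ≥0∞))) hβ₃0
        (Or.inl ENNReal.one_ne_top)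
      simpa using this
    exact tendsto_of_tendsto_of_tendsto_of_le_of_le' hlim
      (tendsto_const_nhds (x := (1:ℝ≥0∞))) hlow hup
end

section
/- Let ψ₁(x) = (x−1)/(x+1). Then 0.96 < ψ₁(x)/((log x)/2) ≤ 1 for all x ∈ [1/2,2] with x ≠ 1, and 0.86 < ψ₁(x)/((log x)/2) ≤ 1 for all x ∈ [1/4,4] with x ≠ 1. -/
open Real Set

private lemma hasDerivAt_aux (c x : ℝ) (hx : (0:ℝ) < x) :
    HasDerivAt (fun t : ℝ => c * ((t - 1) / (t + 1)) - Real.log t)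
      (c * (2 / (x + 1)^2) - x⁻¹) x := by
  have hx1 : x + 1 ≠ 0 := by linarith
  have h1 : HasDerivAt (fun t : ℝ => t - 1) 1 x := (hasDerivAt_id x).sub_const 1
  have h2 : HasDerivAt (fun t : ℝ => t + 1) 1 x := (hasDerivAt_id x).add_const 1
  have h3 : HasDerivAt (fun t : ℝ => (t - 1) / (t + 1))
      ((1 * (x + 1) - (x - 1) * 1) / (x + 1)^2) x := h1.div h2 hx1
  have h4 : (1 * (x + 1) - (x - 1) * 1) / (x + 1)^2 = 2 / (x + 1)^2 := by ring
  rw [h4] at h3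
  exact (h3.const_mul c).sub (Real.hasDerivAt_log hx.ne')

private lemma log_lower (x : ℝ) (hx : 1 ≤ x) : 2 * ((x - 1) / (x + 1)) ≤ Real.log x := by
  have key : MonotoneOn (fun t : ℝ => -(2 * ((t - 1) / (t + 1)) - Real.log t)) (Ici 1) := by
    apply monotoneOn_of_hasDerivWithinAt_nonneg (convex_Ici 1)
      (f' := fun t => -(2 * (2 / (t + 1)^2) - t⁻¹))
    · intro t ht
      have ht0 : (0:ℝ) < t := lt_of_lt_of_le one_pos ht
      exact (hasDerivAt_aux 2 t ht0).neg.continuousAt.continuousWithinAt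
    · intro t ht
      rw [interior_Ici] at ht
      exact ((hasDerivAt_aux 2 t (lt_trans one_pos ht)).neg).hasDerivWithinAt
    · intro t ht
      rw [interior_Ici] at ht
      have ht0 : (0:ℝ) < t := lt_trans one_pos ht
      have h1 : (0:ℝ) < (t + 1)^2 := by positivity
      have h2 : 2 * (2 / (t + 1)^2) ≤ t⁻¹ := by
        rw [inv_eq_one_div, mul_div_assoc' 2 2, div_le_div_iff₀ h1 ht0]
        nlinarith [sq_nonneg (t - 1)]
      linarith
  have h1 := key (self_mem_Ici) (mem_Ici.2 hx) hx
  simp only [Real.log_one] at h1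
  linarith

private lemma log_upper_core (c m B x : ℝ) (hc : 0 < c) (h1m : 1 ≤ m) (hmB : m ≤ B)
    (hcrit : ∀ t : ℝ, 1 < t → t < m → (t + 1)^2 < 2 * c * t)
    (hcrit2 : ∀ t : ℝ, m < t → t < B → 2 * c * t ≤ (t + 1)^2)
    (hB : Real.log B < c * ((B - 1) / (B + 1)))
    (hx1 : 1 < x) (hxB : x ≤ B) :
    Real.log x < c * ((x - 1) / (x + 1)) := by
  rcases le_or_gt x m with hxm | hxm
  · -- strict mono on [1, m]
    have key : StrictMonoOn (fun t : ℝ => c * ((t - 1) / (t + 1)) - Real.log t) (Icc 1 m) := by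
      apply strictMonoOn_of_hasDerivWithinAt_pos (convex_Icc 1 m)
        (f' := fun t => c * (2 / (t + 1)^2) - t⁻¹)
      · intro t ht
        have ht0 : (0:ℝ) < t := lt_of_lt_of_le one_pos ht.1
        exact (hasDerivAt_aux c t ht0).continuousAt.continuousWithinAt
      · intro t ht
        rw [interior_Icc] at ht
        exact (hasDerivAt_aux c t (lt_trans one_pos ht.1)).hasDerivWithinAt
      · intro t ht
        rw [interior_Icc] at ht
        have ht0 : (0:ℝ) < t := lt_trans one_pos ht.1
        have h1 : (0:ℝ) < (t + 1)^2 := by positivity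
        have h2 : t⁻¹ < c * (2 / (t + 1)^2) := by
          rw [inv_eq_one_div, mul_div_assoc' c 2, div_lt_div_iff₀ ht0 h1]
          have := hcrit t ht.1 ht.2
          nlinarith
        linarith
    have h := key (left_mem_Icc.2 h1m) (mem_Icc.2 ⟨le_of_lt hx1, hxm⟩) hx1
    norm_num at h
    linarith
  · -- antitone on [m, B]
    have key : AntitoneOn (fun t : ℝ => c * ((t - 1) / (t + 1)) - Real.log t) (Icc m B) := by
      apply antitoneOn_of_hasDerivWithinAt_nonpos (convex_Icc m B)
        (f' := fun t => c * (2 / (t + 1)^2) - t⁻¹)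
      · intro t ht
        have ht0 : (0:ℝ) < t := lt_of_lt_of_le one_pos (le_trans h1m ht.1)
        exact (hasDerivAt_aux c t ht0).continuousAt.continuousWithinAt
      · intro t ht
        rw [interior_Icc] at ht
        exact (hasDerivAt_aux c t (lt_of_lt_of_le one_pos (le_trans h1m (le_of_lt ht.1)))).hasDerivWithinAt
      · intro t ht
        rw [interior_Icc] at ht
        have ht0 : (0:ℝ) < t := lt_of_lt_of_le one_pos (le_trans h1m (le_of_lt ht.1))
        have h1 : (0:ℝ) < (t + 1)^2 := by positivity
        have h2 : c * (2 / (t + 1)^2) ≤ t⁻¹ := by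
          rw [inv_eq_one_div, mul_div_assoc' c 2, div_le_div_iff₀ h1 ht0]
          have := hcrit2 t ht.1 ht.2
          nlinarith
        linarith
    have h := key (mem_Icc.2 ⟨le_of_lt hxm, hxB⟩) (right_mem_Icc.2 hmB) hxB
    simp only at h
    linarith

private lemma log_upper2 (x : ℝ) (hx1 : 1 < x) (hx2 : x ≤ 2) :
    Real.log x < 25/12 * ((x - 1) / (x + 1)) := by
  refine log_upper_core (25/12) (3/2) 2 x (by norm_num) (by norm_num) (by norm_num) ?_ ?_ ?_ hx1 hx2
  · intro t ht1 ht2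
    nlinarith [mul_pos (show (0:ℝ) < 3/2 - t by linarith) (show (0:ℝ) < 3*t - 2 by linarith)]
  · intro t ht1 ht2
    nlinarith [mul_pos (show (0:ℝ) < t - 3/2 by linarith) (show (0:ℝ) < 3*t - 2 by linarith)]
  · have h := Real.log_two_lt_d9
    norm_num
    linarith

private lemma log_upper4 (x : ℝ) (hx1 : 1 < x) (hx4 : x ≤ 4) :
    Real.log x < 100/43 * ((x - 1) / (x + 1)) := by
  rcases le_or_gt x 2 with hx2 | hx2
  · have h := log_upper2 x hx1 hx2
    have ht : 0 < (x - 1) / (x + 1) := div_pos (by linarith) (by linarith)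
    nlinarith
  · set y := x / 2 with hy
    have hy1 : 1 < y := by rw [hy]; linarith
    have hy2 : y ≤ 2 := by rw [hy]; linarith
    have hsplit : Real.log x = Real.log 2 + Real.log y := by
      rw [hy, show x / 2 = x * (1/2) by ring, Real.log_mul (by linarith) (by norm_num)]
      rw [show (1:ℝ)/2 = 2⁻¹ by norm_num, Real.log_inv]
      ring
    have h2 := log_upper2 y hy1 hy2
    have hlog2 := Real.log_two_lt_d9
    have hxy : x = 2 * y := by rw [hy]; ring
    have key : (0.6931471808 : ℝ) + 25/12 * ((y - 1) / (y + 1))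
        < 100/43 * ((2*y - 1) / (2*y + 1)) := by
      have e : 100/43 * ((2*y - 1) / (2*y + 1)) - 25/12 * ((y - 1) / (y + 1))
          = (250*y^2 + 2275*y - 125) / (516 * (2*y + 1) * (y + 1)) := by
        have h1 : (2*y + 1) ≠ 0 := by positivity
        have h2 : (y + 1) ≠ 0 := by positivity
        field_simp
        ring
      have hpos : (0:ℝ) < 516 * (2*y + 1) * (y + 1) := by positivity
      have hq : (0.6931471808 : ℝ) < (250*y^2 + 2275*y - 125) / (516 * (2*y + 1) * (y + 1)) := by
        rw [lt_div_iff₀ hpos]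
        nlinarith [mul_nonneg (show (0:ℝ) ≤ y - 1 by linarith) (show (0:ℝ) ≤ 2 - y by linarith)]
      linarith [e ▸ hq]
    rw [hsplit, hxy]
    calc Real.log 2 + Real.log y < 0.6931471808 + 25/12 * ((y - 1) / (y + 1)) := by linarith
    _ < 100/43 * ((2*y - 1) / (2*y + 1)) := key

private lemma main_gt (x : ℝ) (hx1 : 1 < x) :
    (x ≤ 2 → 0.96 < ((x - 1) / (x + 1)) / (Real.log x / 2)) ∧
    (x ≤ 4 → 0.86 < ((x - 1) / (x + 1)) / (Real.log x / 2)) ∧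
    ((x - 1) / (x + 1)) / (Real.log x / 2) ≤ 1 := by
  have hL : 0 < Real.log x := Real.log_pos hx1
  have ht : 0 < (x - 1) / (x + 1) := div_pos (by linarith) (by linarith)
  refine ⟨fun hx2 => ?_, fun hx4 => ?_, ?_⟩
  · rw [lt_div_iff₀ (by linarith)]
    have := log_upper2 x hx1 hx2
    nlinarith
  · rw [lt_div_iff₀ (by linarith)]
    have := log_upper4 x hx1 hx4
    nlinarith
  · rw [div_le_one (by linarith)]
    have := log_lower x hx1.le
    linarith

private lemma inv_eq (y : ℝ) (hy : 1 < y) :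
    ((y⁻¹ - 1) / (y⁻¹ + 1)) / (Real.log y⁻¹ / 2) = ((y - 1) / (y + 1)) / (Real.log y / 2) := by
  have hy0 : (0:ℝ) < y := by linarith
  have hL : 0 < Real.log y := Real.log_pos hy
  rw [Real.log_inv]
  have h1 : (y⁻¹ - 1) / (y⁻¹ + 1) = -((y - 1) / (y + 1)) := by
    have hy1 : y + 1 ≠ 0 := by positivity
    have hiy : y⁻¹ + 1 ≠ 0 := by positivity
    rw [div_eq_iff hiy, neg_mul, eq_neg_iff_add_eq_zero]
    field_simp
    ring
  rw [h1, show -Real.log y / 2 = -(Real.log y / 2) by ring, neg_div_neg_eq]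

/-- With `ψ₁(x) = (x−1)/(x+1)`, one has
`0.96 < ψ₁(x)/((log x)/2) ≤ 1` on `[1/2,2] \ {1}` and
`0.86 < ψ₁(x)/((log x)/2) ≤ 1` on `[1/4,4] \ {1}`. -/
theorem psi1_close_to_half_log :
    (∀ x : ℝ, x ∈ Set.Icc (1/2 : ℝ) 2 → x ≠ 1 →
      0.96 < ((x - 1) / (x + 1)) / (Real.log x / 2) ∧
      ((x - 1) / (x + 1)) / (Real.log x / 2) ≤ 1) ∧
    (∀ x : ℝ, x ∈ Set.Icc (1/4 : ℝ) 4 → x ≠ 1 →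
      0.86 < ((x - 1) / (x + 1)) / (Real.log x / 2) ∧
      ((x - 1) / (x + 1)) / (Real.log x / 2) ≤ 1) := by
  constructor
  · rintro x ⟨hxl, hxr⟩ hne
    rcases hne.lt_or_gt with h | h
    · have hx0 : 0 < x := by linarith
      have hinv : x * x⁻¹ = 1 := mul_inv_cancel₀ hx0.ne'
      have hip : 0 < x⁻¹ := inv_pos.2 hx0
      have hy1 : 1 < x⁻¹ := by nlinarith
      have hy2 : x⁻¹ ≤ 2 := by nlinarith
      have e := inv_eq x⁻¹ hy1
      rw [inv_inv] at e
      rw [e]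
      obtain ⟨hA, _, hC⟩ := main_gt x⁻¹ hy1
      exact ⟨hA hy2, hC⟩
    · obtain ⟨hA, _, hC⟩ := main_gt x h
      exact ⟨hA hxr, hC⟩
  · rintro x ⟨hxl, hxr⟩ hne
    rcases hne.lt_or_gt with h | h
    · have hx0 : 0 < x := by linarith
      have hinv : x * x⁻¹ = 1 := mul_inv_cancel₀ hx0.ne'
      have hip : 0 < x⁻¹ := inv_pos.2 hx0
      have hy1 : 1 < x⁻¹ := by nlinarith
      have hy2 : x⁻¹ ≤ 4 := by nlinarith
      have e := inv_eq x⁻¹ hy1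
      rw [inv_inv] at e
      rw [e]
      obtain ⟨_, hB, hC⟩ := main_gt x⁻¹ hy1
      exact ⟨hB hy2, hC⟩
    · obtain ⟨_, hB, hC⟩ := main_gt x h
      exact ⟨hB hxr, hC⟩
end

section
/- Let ψ be either ψ₁(x) = (x−1)/(x+1) or ψ₂(x) = (x−1)/√(x²+1). Then for every fixed y > 0 the map x ↦ ψ(√(x/y)) is concave on [0,∞), for every fixed x > 0 the map y ↦ ψ(√(x/y)) is convex on (0,∞), and ψ(√(x/y)) = −ψ(√(y/x)) for all x, y > 0. -/
open Set Real

private lemma myConcaveCongr {s : Set ℝ} {f g : ℝ → ℝ} (h : ConcaveOn ℝ s f)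
    (he : Set.EqOn f g s) : ConcaveOn ℝ s g :=
  ⟨h.1, fun x hx y hy a b ha hb hab => by
    rw [← he (h.1 hx hy ha hb hab), ← he hx, ← he hy]; exact h.2 hx hy ha hb hab⟩

private lemma myConvexCongr {s : Set ℝ} {f g : ℝ → ℝ} (h : ConvexOn ℝ s f)
    (he : Set.EqOn f g s) : ConvexOn ℝ s g :=
  ⟨h.1, fun x hx y hy a b ha hb hab => by
    rw [← he (h.1 hx hy ha hb hab), ← he hx, ← he hy]; exact h.2 hx hy ha hb hab⟩

private lemma myConcaveComp {s t : Set ℝ} {f g : ℝ → ℝ} (hg : ConcaveOn ℝ t g)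
    (hg' : MonotoneOn g t) (hf : ConcaveOn ℝ s f) (hmap : ∀ x ∈ s, f x ∈ t) :
    ConcaveOn ℝ s (fun x => g (f x)) :=
  ⟨hf.1, fun x hx y hy a b ha hb hab => by
    have h1 := hf.2 hx hy ha hb hab
    have mem1 : a • f x + b • f y ∈ t := hg.1 (hmap _ hx) (hmap _ hy) ha hb hab
    have mem2 : f (a • x + b • y) ∈ t := hmap _ (hf.1 hx hy ha hb hab)
    calc a • g (f x) + b • g (f y) ≤ g (a • f x + b • f y) :=
        hg.2 (hmap _ hx) (hmap _ hy) ha hb hab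
      _ ≤ g (f (a • x + b • y)) := hg' mem1 mem2 h1⟩

private lemma myConvexCompConcave {s t : Set ℝ} {f g : ℝ → ℝ} (hg : ConvexOn ℝ t g)
    (hg' : AntitoneOn g t) (hf : ConcaveOn ℝ s f) (hmap : ∀ x ∈ s, f x ∈ t) :
    ConvexOn ℝ s (fun x => g (f x)) :=
  ⟨hf.1, fun x hx y hy a b ha hb hab => by
    have h1 := hf.2 hx hy ha hb hab
    have mem1 : a • f x + b • f y ∈ t := hg.1 (hmap _ hx) (hmap _ hy) ha hb hab
    have mem2 : f (a • x + b • y) ∈ t := hmap _ (hf.1 hx hy ha hb hab)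
    calc g (f (a • x + b • y)) ≤ g (a • f x + b • f y) := hg' mem1 mem2 h1
      _ ≤ a • g (f x) + b • g (f y) := hg.2 (hmap _ hx) (hmap _ hy) ha hb hab⟩

private lemma myConvexOnInv : ConvexOn ℝ (Set.Ioi (0:ℝ)) fun u : ℝ => u⁻¹ := by
  have h := (strictConvexOn_zpow (m := -1) (by norm_num) (by norm_num)).convexOn
  simpa using h

private lemma myAntitoneInv : AntitoneOn (fun u : ℝ => u⁻¹) (Set.Ioi 0) := by
  intro a ha b hb h
  simp only [mem_Ioi] at ha hb
  exact inv_anti₀ ha h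

private lemma myConvexOnInvAdd (c : ℝ) (hc : 0 < c) :
    ConvexOn ℝ (Set.Ici (0:ℝ)) fun x : ℝ => (x + c)⁻¹ := by
  have h := myConvexOnInv.translate_right c
  have h2 : ConvexOn ℝ (Set.Ici (0:ℝ)) ((fun u : ℝ => u⁻¹) ∘ fun z => c + z) :=
    h.subset (fun x hx => by simp only [mem_preimage, mem_Ioi]; have : (0:ℝ) ≤ x := hx; linarith)
      (convex_Ici 0)
  exact myConvexCongr h2 (fun x _ => by simp [Function.comp, add_comm])

/-- `x ↦ √(x/y)` is concave on `[0,∞)` for `y > 0`. -/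
private lemma mySqrtDivConcave (y : ℝ) (hy : 0 < y) :
    ConcaveOn ℝ (Set.Ici (0:ℝ)) fun x : ℝ => Real.sqrt (x / y) := by
  have h := (Real.strictConcaveOn_sqrt.concaveOn).smul (c := (Real.sqrt y)⁻¹)
    (by positivity)
  exact myConcaveCongr h (fun x hx => by
    rw [Real.sqrt_div hx y]
    simp [div_eq_inv_mul])

private lemma mySqrtMono : MonotoneOn Real.sqrt (Set.Ici 0) :=
  fun a _ b _ h => Real.sqrt_le_sqrt h

/-- concavity for ψ₁ -/
private lemma myConcave1 (y : ℝ) (hy : 0 < y) :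
    ConcaveOn ℝ (Set.Ici (0:ℝ))
      (fun x : ℝ => (Real.sqrt (x / y) - 1) / (Real.sqrt (x / y) + 1)) := by
  -- outer function ψ₁ is concave and monotone on Ici 0
  have hpsiConc : ConcaveOn ℝ (Set.Ici (0:ℝ)) fun u : ℝ => (u - 1) / (u + 1) := by
    have h := (((myConvexOnInvAdd 1 one_pos).smul (c := (2:ℝ)) (by norm_num)).neg).add_const 1
    exact myConcaveCongr h (fun u hu => by
      have h1 : u + 1 ≠ 0 := by have : (0:ℝ) ≤ u := hu; positivity
      simp only [Pi.add_apply, Pi.neg_apply, smul_eq_mul]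
      field_simp
      ring)
  have hpsiMono : MonotoneOn (fun u : ℝ => (u - 1) / (u + 1)) (Set.Ici 0) := by
    intro a ha b hb hab
    have ha' : (0:ℝ) ≤ a := ha
    have hb' : (0:ℝ) ≤ b := hb
    rw [div_le_div_iff₀ (by linarith) (by linarith)]
    nlinarith
  exact myConcaveComp hpsiConc hpsiMono (mySqrtDivConcave y hy)
    (fun x _ => Real.sqrt_nonneg _)

/-- concavity for ψ₂ -/
private lemma myConcave2 (y : ℝ) (hy : 0 < y) :
    ConcaveOn ℝ (Set.Ici (0:ℝ))
      (fun x : ℝ => (Real.sqrt (x / y) - 1) / Real.sqrt (Real.sqrt (x / y) ^ 2 + 1)) := by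
  -- the target function equals √(x/(x+y)) - √y * (√(x+y))⁻¹ on Ici 0
  -- Term 1 : √(x/(x+y)) concave
  have hInner : ConcaveOn ℝ (Set.Ici (0:ℝ)) fun x : ℝ => x / (x + y) := by
    have h := (((myConvexOnInvAdd y hy).smul (c := y) hy.le).neg).add_const 1
    exact myConcaveCongr h (fun x hx => by
      have h1 : x + y ≠ 0 := by have : (0:ℝ) ≤ x := hx; positivity
      simp only [Pi.add_apply, Pi.neg_apply, smul_eq_mul]
      field_simp
      ring)
  have hTerm1 : ConcaveOn ℝ (Set.Ici (0:ℝ)) fun x : ℝ => Real.sqrt (x / (x + y)) := by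
    refine myConcaveComp Real.strictConcaveOn_sqrt.concaveOn mySqrtMono hInner ?_
    intro x hx
    have hx' : (0:ℝ) ≤ x := hx
    have : (0:ℝ) < x + y := by linarith
    exact div_nonneg hx' this.le
  -- Term 2 : -(√y • (√(x+y))⁻¹) concave
  have hSqrtAdd : ConcaveOn ℝ (Set.Ici (0:ℝ)) fun x : ℝ => Real.sqrt (x + y) := by
    have h := Real.strictConcaveOn_sqrt.concaveOn.translate_right y
    have h2 : ConcaveOn ℝ (Set.Ici (0:ℝ)) (Real.sqrt ∘ fun z => y + z) :=
      h.subset (fun x hx => by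
        simp only [mem_preimage, mem_Ici]
        have : (0:ℝ) ≤ x := hx; linarith) (convex_Ici 0)
    exact myConcaveCongr h2 (fun x _ => by simp [Function.comp, add_comm])
  have hTerm2 : ConcaveOn ℝ (Set.Ici (0:ℝ))
      fun x : ℝ => -(Real.sqrt y • (Real.sqrt (x + y))⁻¹) := by
    refine ConvexOn.neg (ConvexOn.smul (by positivity) ?_)
    refine myConvexCompConcave myConvexOnInv myAntitoneInv hSqrtAdd ?_
    intro x hx
    have hx' : (0:ℝ) ≤ x := hx
    have : (0:ℝ) < x + y := by linarith
    exact Real.sqrt_pos.mpr this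
  have hSum := hTerm1.add hTerm2
  refine myConcaveCongr hSum (fun x hx => ?_)
  have hx' : (0:ℝ) ≤ x := hx
  have hxy : (0:ℝ) < x + y := by linarith
  have hdiv : (0:ℝ) ≤ x / y := by positivity
  have hsq : Real.sqrt (x / y) ^ 2 = x / y := Real.sq_sqrt hdiv
  have hsy : (0:ℝ) < Real.sqrt y := Real.sqrt_pos.mpr hy
  have hsxy : (0:ℝ) < Real.sqrt (x + y) := Real.sqrt_pos.mpr hxy
  have e1 : Real.sqrt (x / y) = Real.sqrt x / Real.sqrt y := Real.sqrt_div hx' y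
  have e2 : Real.sqrt (x / y + 1) = Real.sqrt (x + y) / Real.sqrt y := by
    rw [show x / y + 1 = (x + y) / y by field_simp, Real.sqrt_div (by linarith) y]
  have e3 : Real.sqrt (x / (x + y)) = Real.sqrt x / Real.sqrt (x + y) :=
    Real.sqrt_div hx' _
  simp only [Pi.add_apply, smul_eq_mul]
  rw [hsq, e2, e1, e3]
  field_simp
  ring

private lemma myAntisym1 (x : ℝ) (hx : 0 < x) (y : ℝ) (hy : 0 < y) :
    (Real.sqrt (x / y) - 1) / (Real.sqrt (x / y) + 1) =
      -((Real.sqrt (y / x) - 1) / (Real.sqrt (y / x) + 1)) := by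
  have hsx : (0:ℝ) < Real.sqrt x := Real.sqrt_pos.mpr hx
  have hsy : (0:ℝ) < Real.sqrt y := Real.sqrt_pos.mpr hy
  rw [Real.sqrt_div hx.le y, Real.sqrt_div hy.le x]
  rw [show Real.sqrt x / Real.sqrt y - 1 = (Real.sqrt x - Real.sqrt y) / Real.sqrt y by
      field_simp,
    show Real.sqrt x / Real.sqrt y + 1 = (Real.sqrt x + Real.sqrt y) / Real.sqrt y by
      field_simp,
    show Real.sqrt y / Real.sqrt x - 1 = (Real.sqrt y - Real.sqrt x) / Real.sqrt x by
      field_simp,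
    show Real.sqrt y / Real.sqrt x + 1 = (Real.sqrt y + Real.sqrt x) / Real.sqrt x by
      field_simp,
    div_div_div_cancel_right₀ hsy.ne', div_div_div_cancel_right₀ hsx.ne',
    show Real.sqrt y + Real.sqrt x = Real.sqrt x + Real.sqrt y by ring,
    ← neg_div, neg_sub]

private lemma myAntisym2 (x : ℝ) (hx : 0 < x) (y : ℝ) (hy : 0 < y) :
    (Real.sqrt (x / y) - 1) / Real.sqrt (Real.sqrt (x / y) ^ 2 + 1) =
      -((Real.sqrt (y / x) - 1) / Real.sqrt (Real.sqrt (y / x) ^ 2 + 1)) := by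
  have hsx : (0:ℝ) < Real.sqrt x := Real.sqrt_pos.mpr hx
  have hsy : (0:ℝ) < Real.sqrt y := Real.sqrt_pos.mpr hy
  rw [Real.sq_sqrt (by positivity : (0:ℝ) ≤ x / y),
    Real.sq_sqrt (by positivity : (0:ℝ) ≤ y / x),
    Real.sqrt_div hx.le y, Real.sqrt_div hy.le x]
  have e1 : Real.sqrt (x / y + 1) = Real.sqrt (x + y) / Real.sqrt y := by
    rw [show x / y + 1 = (x + y) / y by field_simp, Real.sqrt_div (by positivity) y]
  have e2 : Real.sqrt (y / x + 1) = Real.sqrt (y + x) / Real.sqrt x := by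
    rw [show y / x + 1 = (y + x) / x by field_simp, Real.sqrt_div (by positivity) x]
  rw [e1, e2, show y + x = x + y by ring]
  rw [show Real.sqrt x / Real.sqrt y - 1 = (Real.sqrt x - Real.sqrt y) / Real.sqrt y by
      field_simp,
    show Real.sqrt y / Real.sqrt x - 1 = (Real.sqrt y - Real.sqrt x) / Real.sqrt x by
      field_simp,
    div_div_div_cancel_right₀ hsy.ne', div_div_div_cancel_right₀ hsx.ne',
    ← neg_div, neg_sub]

/-- For `ψ = ψ₁ = (x−1)/(x+1)` or `ψ = ψ₂ = (x−1)/√(x²+1)`: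
for each `y > 0`, `x ↦ ψ(√(x/y))` is concave on `[0,∞)`; for each `x > 0`,
`y ↦ ψ(√(x/y))` is convex on `(0,∞)`; and `ψ(√(x/y)) = −ψ(√(y/x))` for `x, y > 0`. -/
theorem psi_sqrt_ratio_concave_convex_antisym (ψ : ℝ → ℝ)
    (hψ : (ψ = fun x => (x - 1) / (x + 1)) ∨
      (ψ = fun x => (x - 1) / Real.sqrt (x ^ 2 + 1))) :
    (∀ y : ℝ, 0 < y → ConcaveOn ℝ (Set.Ici 0) (fun x => ψ (Real.sqrt (x / y)))) ∧
    (∀ x : ℝ, 0 < x → ConvexOn ℝ (Set.Ioi 0) (fun y => ψ (Real.sqrt (x / y)))) ∧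
    (∀ x : ℝ, 0 < x → ∀ y : ℝ, 0 < y →
      ψ (Real.sqrt (x / y)) = -ψ (Real.sqrt (y / x))) := by
  have hconc : ∀ y : ℝ, 0 < y → ConcaveOn ℝ (Set.Ici 0)
      (fun x => ψ (Real.sqrt (x / y))) := by
    intro y hy
    rcases hψ with rfl | rfl
    · exact myConcave1 y hy
    · exact myConcave2 y hy
  have hanti : ∀ x : ℝ, 0 < x → ∀ y : ℝ, 0 < y →
      ψ (Real.sqrt (x / y)) = -ψ (Real.sqrt (y / x)) := by
    intro x hx y hy
    rcases hψ with rfl | rfl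
    · exact myAntisym1 x hx y hy
    · exact myAntisym2 x hx y hy
  refine ⟨hconc, ?_, hanti⟩
  intro x hx
  have h1 : ConvexOn ℝ (Set.Ioi (0:ℝ)) fun y => -ψ (Real.sqrt (y / x)) :=
    ((hconc x hx).neg).subset (fun y hy => show (0:ℝ) ≤ y from le_of_lt hy) (convex_Ioi 0)
  exact myConvexCongr h1 (fun y hy => (hanti x hx y hy).symm)
end

section
/- Let μ be a σ-finite measure on 𝒳, let 𝒬 be a convex set of probability densities with respect to μ, let x₁,…,xₙ ∈ 𝒳, and let ψ be ψ₁(x) = (x−1)/(x+1) or ψ₂(x) = (x−1)/√(x²+1) (extended by ψ(+∞) = 1, with conventions 0/0 = 1 and a/0 = +∞). If û ∈ 𝒬 maximizes the likelihood u ↦ ∏_{i=1}^n u(x_i) over 𝒬 and ∏_{i=1}^n û(x_i) > 0, then for every t ∈ 𝒬, Σ_{i=1}^n ψ(√(t(x_i)/û(x_i))) ≤ 0; consequently sup_{t∈𝒬} Σ_{i=1}^n ψ(√(t(x_i)/û(x_i))) = 0 = min_{u∈𝒬} sup_{t∈𝒬} Σ_{i=1}^n ψ(√(t(x_i)/u(x_i))),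 i.e. the maximum-likelihood estimator û is a ρ-estimator on the convex model 𝒬. -/
open MeasureTheory

open Classical in
/-- `ψ(√(t(x)/u(x)))` with the conventions `0/0 = 1` (so the value is `ψ(1) = 0`) and
`a/0 = +∞` for `a > 0` (so the value is `ψ(+∞) = 1`, since `ψ₁(+∞) = ψ₂(+∞) = 1`). -/
noncomputable def rhoScore {𝒳 : Type*} (ψ : ℝ → ℝ) (t u : 𝒳 → ℝ) (x : 𝒳) : ℝ :=
  if u x = 0 then (if t x = 0 then 0 else 1) else ψ (Real.sqrt (t x / u x))

lemma psi1_bound (x : ℝ) (hx : 0 ≤ x) :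
    (x - 1) / (x + 1) ≤ (x ^ 2 - 1) / (x ^ 2 - 1 + 4) := by
  rw [div_le_div_iff₀ (by linarith) (by nlinarith)]
  nlinarith [sq_nonneg (x - 1)]

lemma psi2_bound (x : ℝ) (hx : 0 ≤ x) :
    (x - 1) / Real.sqrt (x ^ 2 + 1) ≤ (x ^ 2 - 1) / (x ^ 2 - 1 + 2 * Real.sqrt 2) := by
  set a := Real.sqrt 2 with ha
  have ha2 : a ^ 2 = 2 := Real.sq_sqrt (by norm_num)
  have ha1 : 1 ≤ a := by nlinarith [Real.sqrt_nonneg 2]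
  have ha3 : a ≤ 3/2 := by nlinarith
  set h := Real.sqrt (x ^ 2 + 1) with hh
  have hh2 : h ^ 2 = x ^ 2 + 1 := Real.sq_sqrt (by positivity)
  have hh0 : 0 < h := Real.sqrt_pos.2 (by positivity)
  have hexp : ((x + 1) * h) ^ 2 = (x + 1) ^ 2 * (x ^ 2 + 1) := by rw [mul_pow, hh2]
  have hq : 0 ≤ 2*x^2 + (6 - 4*a)*x + (8 - 4*a) := by nlinarith
  rw [div_le_div_iff₀ hh0 (by nlinarith)]
  rcases le_or_gt 1 x with hx1 | hx1
  · have hsq : (x ^ 2 - 1 + 2 * a) ^ 2 ≤ ((x + 1) * h) ^ 2 := by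
      rw [hexp]
      nlinarith [mul_nonneg (by linarith : (0:ℝ) ≤ x - 1) hq]
    have h1 : (0:ℝ) ≤ x ^ 2 - 1 + 2 * a := by nlinarith
    have h2 : (0:ℝ) ≤ (x + 1) * h := by positivity
    have key : x ^ 2 - 1 + 2 * a ≤ (x + 1) * h := by
      have := Real.sqrt_le_sqrt hsq
      rwa [Real.sqrt_sq h1, Real.sqrt_sq h2] at this
    nlinarith [mul_le_mul_of_nonneg_left key (by linarith : (0:ℝ) ≤ x - 1)]
  · have hsq : ((x + 1) * h) ^ 2 ≤ (x ^ 2 - 1 + 2 * a) ^ 2 := by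
      rw [hexp]
      nlinarith [mul_nonneg (by linarith : (0:ℝ) ≤ 1 - x) hq]
    have h1 : (0:ℝ) ≤ x ^ 2 - 1 + 2 * a := by nlinarith
    have h2 : (0:ℝ) ≤ (x + 1) * h := by positivity
    have key : (x + 1) * h ≤ x ^ 2 - 1 + 2 * a := by
      have := Real.sqrt_le_sqrt hsq
      rwa [Real.sqrt_sq h2, Real.sqrt_sq h1] at this
    nlinarith [mul_le_mul_of_nonpos_left key (by linarith : x - 1 ≤ 0)]


lemma sum_frac_le {n : ℕ} (c : ℝ) (hc : 1 < c) (u t : Fin n → ℝ)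
    (hu : ∀ i, 0 < u i) (ht : ∀ i, 0 ≤ t i)
    (hprod : ∏ i, ((1 - 1/c) * u i + (1/c) * t i) ≤ ∏ i, u i) :
    ∑ i, (t i - u i) / (t i - u i + c * u i) ≤ 0 := by
  have hc0 : (0:ℝ) < c := by linarith
  set m : Fin n → ℝ := fun i => (1 - 1/c) * u i + (1/c) * t i with hm
  have hmpos : ∀ i, 0 < m i := fun i => by
    have h1 : 0 < 1 - 1/c := by
      have : 1/c < 1 := by rw [div_lt_one hc0]; linarith
      linarith
    have := mul_pos h1 (hu i)
    have h2 : 0 ≤ (1/c) * t i := mul_nonneg (by positivity) (ht i)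
    simp only [hm]; linarith
  -- each term equals 1 - u i / m i
  have hterm : ∀ i, (t i - u i) / (t i - u i + c * u i) = 1 - u i / m i := by
    intro i
    have hden : t i - u i + c * u i = c * m i := by
      simp only [hm]; field_simp; ring
    rw [hden]
    rw [eq_sub_iff_add_eq, div_add_div _ _ (ne_of_gt (mul_pos hc0 (hmpos i))) (ne_of_gt (hmpos i))]
    rw [div_eq_one_iff_eq (ne_of_gt (mul_pos (mul_pos hc0 (hmpos i)) (hmpos i)))]
    simp only [hm]; field_simp; ring
  rw [Finset.sum_congr rfl (fun i _ => hterm i), Finset.sum_sub_distrib]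
  simp only [Finset.sum_const, Finset.card_univ, Fintype.card_fin, nsmul_eq_mul, mul_one]
  -- suffices ∑ u/m ≥ n
  have hsum : (n : ℝ) ≤ ∑ i, u i / m i := by
    have hlog : ∀ i, 1 + Real.log (u i / m i) ≤ u i / m i := by
      intro i
      have hpos : 0 < u i / m i := div_pos (hu i) (hmpos i)
      have := Real.log_le_sub_one_of_pos hpos
      linarith
    calc (n:ℝ) ≤ ∑ i, (1 + Real.log (u i / m i)) := by
          rw [Finset.sum_add_distrib]
          simp only [Finset.sum_const, Finset.card_univ, Fintype.card_fin, nsmul_eq_mul, mul_one]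
          have : 0 ≤ ∑ i, Real.log (u i / m i) := by
            rw [← Real.log_prod (fun i _ => ne_of_gt (div_pos (hu i) (hmpos i)))]
            apply Real.log_nonneg
            rw [Finset.prod_div_distrib]
            rw [le_div_iff₀ (Finset.prod_pos (fun i _ => hmpos i))]
            linarith
          linarith
      _ ≤ ∑ i, u i / m i := Finset.sum_le_sum (fun i _ => hlog i)
  linarith

/-- On a convex model `𝒬` of probability densities, a maximum-likelihood
estimator `û` with positive likelihood satisfies `∑ᵢ ψ(√(t(Xᵢ)/û(Xᵢ))) ≤ 0` for every
`t ∈ 𝒬` (with `ψ = ψ₁` or `ψ₂`); hence `sup_{t∈𝒬} ∑ᵢ ψ(√(t(Xᵢ)/û(Xᵢ))) = 0`, which is the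
minimal possible value of `u ↦ sup_{t∈𝒬} ∑ᵢ ψ(√(t(Xᵢ)/u(Xᵢ)))`, i.e. `û` is a
ρ-estimator. -/
theorem mle_is_rho_estimator_on_convex_model
    {𝒳 : Type*} [MeasurableSpace 𝒳] (μ : Measure 𝒳) [SigmaFinite μ]
    (𝒬 : Set (𝒳 → ℝ)) (hconv : Convex ℝ 𝒬)
    (hdens : ∀ q ∈ 𝒬, (∀ x, 0 ≤ q x) ∧ ∫ x, q x ∂μ = 1)
    (ψ : ℝ → ℝ)
    (hψ : (ψ = fun x => (x - 1) / (x + 1)) ∨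
      (ψ = fun x => (x - 1) / Real.sqrt (x ^ 2 + 1)))
    (n : ℕ) (X : Fin n → 𝒳) (uhat : 𝒳 → ℝ) (huQ : uhat ∈ 𝒬)
    (hmax : ∀ t ∈ 𝒬, ∏ i, t (X i) ≤ ∏ i, uhat (X i))
    (hpos : 0 < ∏ i, uhat (X i)) :
    (∀ t ∈ 𝒬, ∑ i, rhoScore ψ t uhat (X i) ≤ 0) ∧
    sSup {r : ℝ | ∃ t ∈ 𝒬, r = ∑ i, rhoScore ψ t uhat (X i)} = 0 ∧
    ∀ u ∈ 𝒬, 0 ≤ sSup {r : ℝ | ∃ t ∈ 𝒬, r = ∑ i, rhoScore ψ t u (X i)} := by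
  have hψ1 : ψ 1 = 0 := by rcases hψ with h | h <;> subst h <;> norm_num
  have hψle1 : ∀ x, 0 ≤ x → ψ x ≤ 1 := by
    rcases hψ with h | h <;> subst h <;> intro x hx
    · rw [div_le_one (by linarith)]; linarith
    · have h0 : 0 < Real.sqrt (x ^ 2 + 1) := Real.sqrt_pos.2 (by positivity)
      rw [div_le_one h0]
      calc x - 1 ≤ |x - 1| := le_abs_self _
        _ = Real.sqrt ((x - 1) ^ 2) := (Real.sqrt_sq_eq_abs _).symm
        _ ≤ Real.sqrt (x ^ 2 + 1) := Real.sqrt_le_sqrt (by nlinarith)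
  obtain ⟨c, hc1, hbound⟩ :
      ∃ c : ℝ, 1 < c ∧ ∀ x, 0 ≤ x → ψ x ≤ (x ^ 2 - 1) / (x ^ 2 - 1 + c) := by
    rcases hψ with h | h
    · exact ⟨4, by norm_num, fun x hx => by rw [h]; exact psi1_bound x hx⟩
    · refine ⟨2 * Real.sqrt 2, ?_, fun x hx => by rw [h]; exact psi2_bound x hx⟩
      nlinarith [Real.sq_sqrt (show (0:ℝ) ≤ 2 by norm_num), Real.sqrt_nonneg 2]
  have hupos : ∀ i, 0 < uhat (X i) := by
    intro i
    have hne : ∏ i, uhat (X i) ≠ 0 := ne_of_gt hpos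
    rw [Finset.prod_ne_zero_iff] at hne
    exact lt_of_le_of_ne ((hdens uhat huQ).1 (X i)) (Ne.symm (hne i (Finset.mem_univ i)))
  have hdiag : ∀ u : 𝒳 → ℝ, ∀ x, rhoScore ψ u u x = 0 := by
    intro u x
    by_cases h : u x = 0
    · simp [rhoScore, h]
    · simp only [rhoScore, if_neg h, div_self h, Real.sqrt_one, hψ1]
  have hsle : ∀ t u : 𝒳 → ℝ, ∀ x, rhoScore ψ t u x ≤ 1 := by
    intro t u x
    by_cases h : u x = 0
    · simp only [rhoScore, if_pos h]; split <;> norm_num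
    · simp only [rhoScore, if_neg h]; exact hψle1 _ (Real.sqrt_nonneg _)
  have hbdd : ∀ u : 𝒳 → ℝ, BddAbove {r : ℝ | ∃ t ∈ 𝒬, r = ∑ i, rhoScore ψ t u (X i)} := by
    intro u
    refine ⟨n, ?_⟩
    rintro r ⟨t, ht, rfl⟩
    calc ∑ i, rhoScore ψ t u (X i) ≤ ∑ _i : Fin n, (1:ℝ) :=
          Finset.sum_le_sum (fun i _ => hsle t u (X i))
      _ = n := by simp
  have part1 : ∀ t ∈ 𝒬, ∑ i, rhoScore ψ t uhat (X i) ≤ 0 := by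
    intro t ht
    have htnn : ∀ x, 0 ≤ t x := (hdens t ht).1
    have hcpos : (0:ℝ) < c := by linarith
    have hmem : (1 - 1/c) • uhat + (1/c) • t ∈ 𝒬 := by
      apply hconv huQ ht
      · have : 1/c ≤ 1 := by rw [div_le_one hcpos]; linarith
        linarith
      · positivity
      · ring
    have hprod := hmax _ hmem
    have hprodeq : ∏ i, ((1 - 1/c) • uhat + (1/c) • t) (X i)
        = ∏ i, ((1 - 1/c) * uhat (X i) + (1/c) * t (X i)) := by
      simp [Pi.add_apply, Pi.smul_apply, smul_eq_mul]
    rw [hprodeq] at hprod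
    have hsum := sum_frac_le c hc1 (fun i => uhat (X i)) (fun i => t (X i))
      (fun i => hupos i) (fun i => htnn (X i)) hprod
    refine le_trans (Finset.sum_le_sum ?_) hsum
    intro i _
    have hu0 : uhat (X i) ≠ 0 := ne_of_gt (hupos i)
    simp only [rhoScore, if_neg hu0]
    set r := t (X i) / uhat (X i) with hr
    have hr0 : 0 ≤ r := div_nonneg (htnn _) (hupos i).le
    have hb := hbound (Real.sqrt r) (Real.sqrt_nonneg r)
    rw [Real.sq_sqrt hr0] at hb
    refine hb.trans (le_of_eq ?_)
    have hd1 : (0:ℝ) < r - 1 + c := by linarith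
    have hd2 : (0:ℝ) < t (X i) - uhat (X i) + c * uhat (X i) := by
      have h1 : 0 < (c - 1) * uhat (X i) := mul_pos (by linarith) (hupos i)
      have h2 := htnn (X i)
      nlinarith
    rw [div_eq_div_iff (ne_of_gt hd1) (ne_of_gt hd2)]
    rw [hr]
    field_simp
  have h0mem : (0:ℝ) ∈ {r : ℝ | ∃ t ∈ 𝒬, r = ∑ i, rhoScore ψ t uhat (X i)} :=
    ⟨uhat, huQ, by simp [hdiag uhat]⟩
  refine ⟨part1, ?_, ?_⟩
  · apply le_antisymm
    · exact csSup_le ⟨0, h0mem⟩ (by rintro r ⟨t, ht, rfl⟩; exact part1 t ht)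
    · exact le_csSup (hbdd uhat) h0mem
  · intro u huQ'
    exact le_csSup (hbdd u) ⟨u, huQ', by simp [hdiag u]⟩
end
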